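/- arXiv:2102.12287 — 6 statements merged into one kernel-verified Lean document; each statement's English description precedes it below -/
import Mathlib

section
/- Let 1 ≤ p, r, s ≤ m be integers with p ≥ r and r + s = k + 1. If η ∈ Λ^p M, a ∈ R is a non-zero-divisor, n ≥ 0, and a^n · η = Σ_{J ∈ 𝒥(r,k)} ω_J ∧ γ_J for some γ_J ∈ Λ^{p−r} M, then ω_I ∧ η = 0 for every I ∈ 𝒥(s,k). -/
/-!
Statement 2 (Theorem 1, part (ii), converse half): with `R`, `M`, `ω₁,…,ω_k` as in the
paper and `1 ≤ p, r, s ≤ m`, `p ≥ r`, `r + s = k + 1`: if `η ∈ Λ^p M`, `a ∈ R` is a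
non-zero-divisor, `n ≥ 0`, and `aⁿ η = Σ_{J ∈ 𝒥(r,k)} ω_J ∧ γ_J` with `γ_J ∈ Λ^{p−r} M`,
then `ω_I ∧ η = 0` for every `I ∈ 𝒥(s,k)`.
-/

open ExteriorAlgebra

/-- `ω_J = ω_{j₁} ∧ ⋯ ∧ ω_{j_r}` for a strictly increasing multi-index `J`, encoded as a
finite set `s` of indices listed in increasing order. -/
noncomputable def wedgeProd (R : Type*) [CommRing R] {M : Type*} [AddCommGroup M] [Module R M]
    {k : ℕ} (ω : Fin k → M) (s : Finset (Fin k)) : ExteriorAlgebra R M :=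
  ((s.sort (· ≤ ·)).map fun j => ExteriorAlgebra.ι R (ω j)).prod

section Aux
variable {R : Type*} [CommRing R] {M : Type*} [AddCommGroup M] [Module R M]

/-- Product of `ι`-images along a list of indices. -/
noncomputable def listWedge {α : Type*} (f : α → M) (l : List α) : ExteriorAlgebra R M :=
  (l.map fun j => ExteriorAlgebra.ι R (f j)).prod

@[simp] lemma listWedge_nil {α : Type*} (f : α → M) : listWedge (R := R) f ([] : List α) = 1 := rfl

@[simp] lemma listWedge_cons {α : Type*} (f : α → M) (i : α) (l : List α) :
    listWedge (R := R) f (i :: l) = ExteriorAlgebra.ι R (f i) * listWedge f l := by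
  simp [listWedge]

lemma listWedge_append {α : Type*} (f : α → M) (l t : List α) :
    listWedge (R := R) f (l ++ t) = listWedge f l * listWedge f t := by
  simp [listWedge]

lemma listWedge_eq_zero_of_not_nodup {α : Type*} (f : α → M) {l : List α}
    (h : ¬ l.Nodup) : listWedge (R := R) f l = 0 := by
  have h1 : listWedge (R := R) f l = ιMulti R l.length (fun i => f (l.get i)) := by
    rw [ιMulti_apply, listWedge]
    congr 1
    rw [← List.ofFn_get l, List.map_ofFn]
    simp [Function.comp_def]
  rw [List.nodup_iff_injective_get] at h
  simp only [Function.Injective, not_forall] at h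
  obtain ⟨i, j, hij, hne⟩ := h
  rw [h1]
  exact AlternatingMap.map_eq_zero_of_eq _ _ (by rw [hij]) hne

lemma listWedge_perm {α : Type*} (f : α → M) {l t : List α} (h : l.Perm t) :
    ∃ ε : ℤˣ, listWedge (R := R) f l = (ε : ℤ) • listWedge f t := by
  induction h with
  | nil => exact ⟨1, by simp⟩
  | cons x h ih =>
      obtain ⟨ε, hε⟩ := ih
      refine ⟨ε, ?_⟩
      rw [listWedge_cons, listWedge_cons, hε, mul_smul_comm]
  | swap x y l =>
      refine ⟨-1, ?_⟩
      have := ExteriorAlgebra.ι_add_mul_swap (R := R) (f y) (f x)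
      have h2 : ExteriorAlgebra.ι R (f y) * ExteriorAlgebra.ι R (f x)
          = - (ExteriorAlgebra.ι R (f x) * ExteriorAlgebra.ι R (f y)) :=
        eq_neg_of_add_eq_zero_left this
      simp [← mul_assoc, h2]
  | trans h1 h2 ih1 ih2 =>
      obtain ⟨ε1, he1⟩ := ih1
      obtain ⟨ε2, he2⟩ := ih2
      exact ⟨ε1 * ε2, by rw [he1, he2, smul_smul]; push_cast; ring_nf⟩

variable {m : ℕ} (b : Module.Basis (Fin m) R M)

/-- Iterated contraction. -/
noncomputable def iterContract : List (Fin m) → ExteriorAlgebra R M →ₗ[R] ExteriorAlgebra R M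
  | [] => LinearMap.id
  | i :: l => (iterContract l).comp
      (CliffordAlgebra.contractLeft (Q := (0 : QuadraticForm R M)) (b.coord i))

lemma coord_basis (i j : Fin m) : b.coord i (b j) = if j = i then 1 else 0 := by
  simp [Module.Basis.coord_apply, Module.Basis.repr_self, Finsupp.single_apply]

lemma contract_listWedge_not_mem (i : Fin m) (t : List (Fin m)) (hi : i ∉ t) :
    CliffordAlgebra.contractLeft (Q := (0 : QuadraticForm R M)) (b.coord i)
      (listWedge (fun j => b j) t) = 0 := by
  induction t with
  | nil => simpa using CliffordAlgebra.contractLeft_one (0 : QuadraticForm R M) (b.coord i)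
  | cons j t ih =>
      have hj : j ≠ i := fun h => hi (h ▸ List.mem_cons_self)
      have hit : i ∉ t := fun h => hi (List.mem_cons_of_mem _ h)
      rw [listWedge_cons]
      rw [CliffordAlgebra.contractLeft_ι_mul, ih hit, coord_basis, if_neg hj]
      simp

lemma contract_listWedge_mem (i : Fin m) (t : List (Fin m)) (ht : t.Nodup) (hi : i ∈ t) :
    ∃ ε : ℤˣ, CliffordAlgebra.contractLeft (Q := (0 : QuadraticForm R M)) (b.coord i)
      (listWedge (fun j => b j) t) = (ε : ℤ) • listWedge (fun j => b j) (t.erase i) := by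
  induction t with
  | nil => simp at hi
  | cons j t ih =>
      rcases eq_or_ne j i with h | hji
      · subst h
        have hit : j ∉ t := (List.nodup_cons.mp ht).1
        refine ⟨1, ?_⟩
        rw [listWedge_cons, CliffordAlgebra.contractLeft_ι_mul,
          contract_listWedge_not_mem b j t hit, coord_basis, if_pos rfl]
        simp [List.erase_cons_head]
      · have hit : i ∈ t := by
          rcases List.mem_cons.mp hi with h | h
          · exact absurd h.symm hji
          · exact h
        obtain ⟨ε, hε⟩ := ih (List.nodup_cons.mp ht).2 hit
        refine ⟨-ε, ?_⟩
        rw [listWedge_cons, CliffordAlgebra.contractLeft_ι_mul, hε, coord_basis, if_neg hji]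
        rw [List.erase_cons_tail (by simpa using hji), listWedge_cons, mul_smul_comm]
        simp

lemma iterContract_diag (t : List (Fin m)) (ht : t.Nodup) :
    iterContract b t (listWedge (fun j => b j) t) = 1 := by
  induction t with
  | nil => simp [iterContract, listWedge]
  | cons i t ih =>
      have hit : i ∉ t := (List.nodup_cons.mp ht).1
      rw [iterContract]
      simp only [LinearMap.comp_apply]
      rw [listWedge_cons, CliffordAlgebra.contractLeft_ι_mul,
        contract_listWedge_not_mem b i t hit, coord_basis, if_pos rfl]
      simp only [one_smul, mul_zero, sub_zero]
      exact ih (List.nodup_cons.mp ht).2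

lemma algebraMapInv_listWedge_ne_nil (t : List (Fin m)) (ht : t ≠ []) :
    algebraMapInv (R := R) (listWedge (fun j : Fin m => b j) t) = 0 := by
  cases t with
  | nil => exact absurd rfl ht
  | cons j t =>
      rw [listWedge_cons, map_mul]
      have : algebraMapInv (R := R) (ExteriorAlgebra.ι R ((b j : M))) = 0 := by
        simp [algebraMapInv]
      rw [this, zero_mul]

lemma iterContract_offdiag (l : List (Fin m)) : ∀ (t : List (Fin m)), t.Nodup →
    l.toFinset ≠ t.toFinset →
    algebraMapInv (R := R) (iterContract b l (listWedge (fun j => b j) t)) = 0 := by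
  induction l with
  | nil =>
      intro t ht hne
      have : t ≠ [] := by rintro rfl; simp at hne
      simpa [iterContract] using algebraMapInv_listWedge_ne_nil b t this
  | cons i l ih =>
      intro t ht hne
      rw [iterContract]
      simp only [LinearMap.comp_apply]
      by_cases hit : i ∈ t
      · obtain ⟨ε, hε⟩ := contract_listWedge_mem b i t ht hit
        rw [hε, map_zsmul, map_zsmul]
        have herase : l.toFinset ≠ (t.erase i).toFinset := by
          intro h
          apply hne
          have h1 : t.toFinset = insert i (t.erase i).toFinset := by
            ext x
            simp only [List.mem_toFinset, Finset.mem_insert, List.Nodup.mem_erase_iff ht]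
            constructor
            · intro hx
              rcases eq_or_ne x i with rfl | hxi
              · exact Or.inl rfl
              · exact Or.inr ⟨hxi, hx⟩
            · rintro (rfl | ⟨-, hx⟩)
              · exact hit
              · exact hx
          rw [h1, ← h]
          simp
        rw [ih (t.erase i) (ht.erase i) herase]
        simp
      · rw [contract_listWedge_not_mem b i t hit]
        simp

lemma exterior_torsionfree (b : Module.Basis (Fin m) R M) {a : R} (ha : a ∈ nonZeroDivisors R)
    {x : ExteriorAlgebra R M} (h : a • x = 0) : x = 0 := by
  -- x lies in the span of sorted monomials
  set g : Finset (Fin m) → ExteriorAlgebra R M :=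
    fun S => listWedge (fun j => b j) (S.sort (· ≤ ·)) with hg
  have hspan : ∀ y : ExteriorAlgebra R M, y ∈ Submodule.span R (Set.range g) := by
    intro y
    set N := Submodule.span R (Set.range g) with hN
    have hone : (1 : ExteriorAlgebra R M) ∈ N := by
      apply Submodule.subset_span
      exact ⟨∅, by simp [hg, Finset.sort_empty]⟩
    have hmono : ∀ l : List (Fin m), listWedge (fun j => b j) l ∈ N := by
      intro l
      by_cases hl : l.Nodup
      · have hperm : l.Perm (l.toFinset.sort (· ≤ ·)) := by
          exact ((Finset.sort_perm_toList _ _).trans (List.toFinset_toList hl)).symm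
        obtain ⟨ε, hε⟩ := listWedge_perm (R := R) (fun j : Fin m => b j) hperm
        rw [hε]
        exact zsmul_mem (Submodule.subset_span (Set.mem_range_self (f := g) l.toFinset)) _
      · rw [listWedge_eq_zero_of_not_nodup _ hl]; exact Submodule.zero_mem _
    induction y using CliffordAlgebra.induction with
    | algebraMap r =>
        rw [Algebra.algebraMap_eq_smul_one]
        exact Submodule.smul_mem _ _ hone
    | ι v =>
        have hv : ExteriorAlgebra.ι R v = ∑ i, b.repr v i • ExteriorAlgebra.ι R (b i) := by
          conv_lhs => rw [← Module.Basis.sum_repr b v]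
          rw [map_sum]
          simp only [map_smul]
        rw [hv]
        refine Submodule.sum_mem _ fun i _ => Submodule.smul_mem _ _ ?_
        simpa [listWedge] using hmono [i]
    | mul x y hx hy =>
        have : N * N ≤ N := by
          rw [hN, Submodule.span_mul_span]
          rw [Submodule.span_le]
          rintro z hz
          rw [Set.mem_mul] at hz
          obtain ⟨u, ⟨S, rfl⟩, v, ⟨T, rfl⟩, rfl⟩ := hz
          rw [hg]
          simp only
          rw [← listWedge_append]
          exact hmono _
        exact this (Submodule.mul_mem_mul hx hy)
    | add x y hx hy => exact Submodule.add_mem _ hx hy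
  obtain ⟨c, hc⟩ := (Submodule.mem_span_range_iff_exists_fun R).mp (hspan x)
  have hcT : ∀ T : Finset (Fin m), c T = 0 := by
    intro T
    set φ : ExteriorAlgebra R M →ₗ[R] R :=
      (algebraMapInv (R := R) (M := M)).toLinearMap.comp (iterContract b (T.sort (· ≤ ·)))
    have hφg : ∀ S, φ (g S) = if S = T then 1 else 0 := by
      intro S
      by_cases hST : S = T
      · subst hST
        simp only [φ, LinearMap.comp_apply, AlgHom.toLinearMap_apply, hg]
        rw [iterContract_diag b _ (Finset.sort_nodup _ _)]
        simp
      · simp only [φ, LinearMap.comp_apply, AlgHom.toLinearMap_apply, hg]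
        rw [iterContract_offdiag b _ _ (Finset.sort_nodup _ _)
          (by rw [Finset.sort_toFinset, Finset.sort_toFinset]; exact fun h => hST h.symm)]
        simp [hST]
    have h1 : φ x = c T := by
      rw [← hc, map_sum]
      simp_rw [map_smul, hφg]
      simp
    have h2 : a * c T = 0 := by
      have := congrArg φ h
      rw [map_smul, map_zero, h1] at this
      simpa using this
    exact ha.2 (c T) (by rw [mul_comm]; exact h2)
  rw [← hc]
  simp [hcT]


end Aux

theorem stmt_2 {R : Type*} [CommRing R] {M : Type*} [AddCommGroup M] [Module R M]
    {m k : ℕ} (b : Module.Basis (Fin m) R M) (hk1 : 1 ≤ k) (hkm : k ≤ m)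
    (ω : Fin k → M) (p r s : ℕ)
    (hp1 : 1 ≤ p) (hpm : p ≤ m) (hr1 : 1 ≤ r) (hrm : r ≤ m) (hs1 : 1 ≤ s) (hsm : s ≤ m)
    (hrp : r ≤ p) (hrs : r + s = k + 1)
    (η : ExteriorAlgebra R M) (hη : η ∈ ⋀[R]^p M)
    (a : R) (ha : a ∈ nonZeroDivisors R) (n : ℕ)
    (γ : Finset (Fin k) → ExteriorAlgebra R M) (hγ : ∀ J, γ J ∈ ⋀[R]^(p - r) M)
    (hrep : a ^ n • η = ∑ J ∈ Finset.univ.powersetCard r, wedgeProd R ω J * γ J) :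
    ∀ I ∈ Finset.univ.powersetCard s, wedgeProd R ω I * η = 0 := by
  intro I hI
  have hIcard : I.card = s := (Finset.mem_powersetCard.mp hI).2
  have hzero : ∀ J ∈ Finset.univ.powersetCard r, wedgeProd R ω I * wedgeProd R ω J = 0 := by
    intro J hJ
    have hJcard : J.card = r := (Finset.mem_powersetCard.mp hJ).2
    have heq : wedgeProd R ω I * wedgeProd R ω J
        = listWedge ω (I.sort (· ≤ ·) ++ J.sort (· ≤ ·)) := by
      rw [listWedge_append]; rfl
    rw [heq]
    apply listWedge_eq_zero_of_not_nodup
    intro hnd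
    have hlen := hnd.length_le_card
    rw [List.length_append, Finset.length_sort, Finset.length_sort, hIcard, hJcard,
      Fintype.card_fin] at hlen
    omega
  have key : a ^ n • (wedgeProd R ω I * η) = 0 := by
    rw [← mul_smul_comm, hrep, Finset.mul_sum]
    refine Finset.sum_eq_zero fun J hJ => ?_
    rw [← mul_assoc, hzero J hJ, zero_mul]
  exact exterior_torsionfree b (pow_mem ha n) key
end

section
/- If depth(I(Ω)) ≥ 2 (equivalently, I(Ω) contains a regular sequence of length 2), then every η ∈ M satisfying Ω ∧ η = 0 can be represented as η = Σ_{i=1}^k a_i ω_i with coefficients a_i ∈ R. -/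
/-!
Statement 3 (Corollary 1 (i)): if `depth I(Ω) ≥ 2`, i.e. `I(Ω)` contains a regular sequence
of length `2`, then every `η ∈ M` with `Ω ∧ η = 0` can be written `η = Σᵢ aᵢ ωᵢ` with
`aᵢ ∈ R`.
-/

open ExteriorAlgebra

/-- A list `a₁, …, a_q` of elements of `R` is a regular sequence: the ideal it generates is
proper, and each `aᵢ` is a non-zero-divisor on `R ⧸ (a₁, …, a_{i-1})`. -/
def IsRegSeq (R : Type*) [CommRing R] (l : List R) : Prop :=
  Ideal.span {x | x ∈ l} ≠ ⊤ ∧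
    ∀ i : Fin l.length, ∀ r : R,
      l.get i * r ∈ Ideal.span {x | x ∈ l.take i.1} →
        r ∈ Ideal.span {x | x ∈ l.take i.1}

/-- The ideal `I(x)` generated by the coefficients of an element `x` of the exterior algebra
of a (finite free) module `M` in an induced basis; equivalently (and basis-independently),
the ideal generated by the values `φ x` over all linear functionals `φ`. -/
def coeffIdeal (R : Type*) [CommRing R] {M : Type*} [AddCommGroup M] [Module R M]
    (x : ExteriorAlgebra R M) : Ideal R :=
  Ideal.span (Set.range fun φ : Module.Dual R (ExteriorAlgebra R M) => φ x)

section AuxLemmas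
variable {R : Type*} [CommRing R] {M : Type*} [AddCommGroup M] [Module R M] {m : ℕ}

/-- The "minor" alternating map: determinant of the matrix of `b`-coordinates `s` of the
arguments. -/
noncomputable def coordAlt (b : Module.Basis (Fin m) R M) (n : ℕ) (s : Fin n → Fin m) :
    M [⋀^Fin n]→ₗ[R] R :=
  Matrix.detRowAlternating.compLinearMap (LinearMap.pi fun i => b.coord (s i))

lemma coordAlt_apply (b : Module.Basis (Fin m) R M) (n : ℕ) (s : Fin n → Fin m) (u : Fin n → M) :
    coordAlt b n s u = Matrix.det (Matrix.of fun r c => b.repr (u r) (s c)) := rfl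

lemma iotaMulti_snoc {n : ℕ} (v : Fin n → M) (x : M) :
    ιMulti R (n + 1) (Fin.snoc v x) = ιMulti R n v * ι R x := by
  rw [ιMulti_apply, ιMulti_apply, List.ofFn_succ']
  simp

lemma wedgeProd_univ_eq {k : ℕ} (ω : Fin k → M) :
    wedgeProd R ω Finset.univ = ιMulti R k ω := by
  rw [wedgeProd, Fin.sort_univ, ιMulti_apply, List.ofFn_eq_map]

lemma coordAlt_eq_zero (b : Module.Basis (Fin m) R M) {n : ℕ} (u : Fin n → M)
    (hu : ιMulti R n u = 0) (s : Fin n → Fin m) : coordAlt b n s u = 0 := by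
  classical
  have h := congrArg
    (liftAlternating (Function.update (fun i => (0 : M [⋀^Fin i]→ₗ[R] R)) n (coordAlt b n s))) hu
  rwa [liftAlternating_apply_ιMulti, Function.update_self, map_zero] at h

/-- Cramer-type rule: if `ω₁ ∧ ⋯ ∧ ω_k ∧ η = 0` then each coordinate minor of `ω` times `η`
lies in the span of the `ωᵢ`. -/
lemma cramer_mem (b : Module.Basis (Fin m) R M) {k : ℕ} (ω : Fin k → M) (η : M)
    (hz : ιMulti R (k + 1) (Fin.snoc ω η) = 0) (s : Fin k → Fin m) :
    coordAlt b k s ω • η ∈ Submodule.span R (Set.range ω) := by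
  classical
  set u : Fin (k+1) → M := Fin.snoc ω η with hu
  set d : Fin (k+1) → R := fun i =>
    Matrix.det (Matrix.of fun r c : Fin k => b.repr (u (i.succAbove r)) (s c)) with hd
  have hdlast : d (Fin.last k) = coordAlt b k s ω := by
    rw [coordAlt_apply, hd]
    refine congrArg Matrix.det (Matrix.ext fun r c => ?_)
    simp [hu, Fin.succAbove_last, Fin.snoc_castSucc]
  have hkk : (-1 : R) ^ (k + k) = 1 := by
    rw [← two_mul, pow_mul]; norm_num
  have key : ∀ t : Fin m,
      ∑ i : Fin (k+1), (-1 : R) ^ ((i : ℕ) + k) * b.repr (u i) t * d i = 0 := by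
    intro t
    have h0 : coordAlt b (k+1) (Fin.snoc s t) u = 0 := coordAlt_eq_zero b u hz _
    rw [coordAlt_apply, Matrix.det_succ_column _ (Fin.last k)] at h0
    rw [← h0]
    refine Finset.sum_congr rfl fun i _ => ?_
    congr 1
    · rw [Fin.val_last]
      simp [Fin.snoc_last]
    · refine congrArg Matrix.det (Matrix.ext fun r c => ?_)
      simp [Matrix.submatrix_apply, Fin.succAbove_last, Fin.snoc_castSucc]
  have hmain : coordAlt b k s ω • η
      + ∑ j : Fin k, ((-1 : R) ^ ((j : ℕ) + k) * d j.castSucc) • ω j = 0 := by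
    refine b.ext_elem_iff.mpr fun t => ?_
    have hk := key t
    rw [Fin.sum_univ_castSucc] at hk
    simp only [hu, Fin.snoc_castSucc, Fin.snoc_last, Fin.val_last, Fin.coe_castSucc,
      hdlast, hkk, one_mul] at hk
    have hsum : ∀ t : Fin m, ∑ j : Fin k, ((-1 : R) ^ ((j : ℕ) + k) * d j.castSucc) * b.repr (ω j) t
        = ∑ j : Fin k, (-1 : R) ^ ((j : ℕ) + k) * b.repr (ω j) t * d j.castSucc :=
      fun t => Finset.sum_congr rfl fun j _ => by ring
    simp only [map_add, map_smul, map_sum, Finsupp.add_apply, Finsupp.smul_apply,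
      Finsupp.coe_finset_sum, Finset.sum_apply, smul_eq_mul, map_zero, Finsupp.coe_zero,
      Pi.zero_apply]
    rw [hsum]
    linear_combination hk
  rw [eq_neg_of_add_eq_zero_left hmain]
  exact Submodule.neg_mem _
    (Submodule.sum_smul_mem _ _ fun j _ => Submodule.subset_span ⟨j, rfl⟩)

lemma altmap_sum_apply {N : Type*} [AddCommGroup N] [Module R N] {k : ℕ} {α : Type*}
    (t : Finset α) (f : α → (M [⋀^Fin k]→ₗ[R] N)) (v : Fin k → M) :
    (∑ a ∈ t, f a) v = ∑ a ∈ t, f a v := by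
  classical
  induction t using Finset.induction with
  | empty => simp
  | insert _ _ ha ih => simp [Finset.sum_insert ha, ih]

/-- Expansion of a wedge of `k` vectors in terms of the induced "basis" wedges, with the
coordinate minors as coefficients. -/
lemma iotaMulti_expand (b : Module.Basis (Fin m) R M) {k : ℕ} (ω : Fin k → M) :
    haveI : DecidablePred (fun s : Fin k → Fin m => StrictMono s) :=
      fun _ => Classical.propDecidable _
    ιMulti R k ω = ∑ s ∈ Finset.univ.filter (fun s : Fin k → Fin m => StrictMono s),
      coordAlt b k s ω • ιMulti R k (fun i => b (s i)) := by
  classical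
  set F := Finset.univ.filter (fun s : Fin k → Fin m => StrictMono s) with hF
  have hmaps : (ιMulti R k : M [⋀^Fin k]→ₗ[R] ExteriorAlgebra R M)
      = ∑ s ∈ F, (LinearMap.toSpanSingleton R _
          (ιMulti R k (fun i => b (s i)))).compAlternatingMap (coordAlt b k s) := by
    refine Module.Basis.ext_alternating b fun v hv => ?_
    -- construct the monotone reparametrization
    set S : Finset (Fin m) := Finset.univ.image v with hS
    have hScard : S.card = k := by
      rw [hS, Finset.card_image_of_injective _ hv, Finset.card_univ, Fintype.card_fin]
    set w : Fin k → Fin m := fun i => ((S.orderIsoOfFin hScard i : S) : Fin m) with hw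
    have hwmono : StrictMono w := fun i j hij => by
      simpa [hw] using (S.orderIsoOfFin hScard).strictMono hij
    have hmem : ∀ i, v i ∈ S := fun i => Finset.mem_image_of_mem v (Finset.mem_univ i)
    set f' : Fin k → Fin k := fun i => (S.orderIsoOfFin hScard).symm ⟨v i, hmem i⟩ with hf'
    have hf'inj : Function.Injective f' := by
      intro i j h
      apply hv
      have := congrArg (fun z => ((S.orderIsoOfFin hScard z : S) : Fin m)) h
      simpa [hf', OrderIso.apply_symm_apply] using this
    set σ : Equiv.Perm (Fin k) := Equiv.ofBijective f' (Finite.injective_iff_bijective.1 hf'inj)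
      with hσ
    have hwv : ∀ i, w (σ i) = v i := by
      intro i
      have h1 : σ i = f' i := rfl
      have h2 : (S.orderIsoOfFin hScard) (f' i) = ⟨v i, hmem i⟩ :=
        (S.orderIsoOfFin hScard).apply_symm_apply _
      simpa [hw, h1] using congrArg Subtype.val h2
    have hcomp : (fun i => b (v i)) = (fun i => b (w i)) ∘ σ :=
      funext fun i => by rw [Function.comp_apply, hwv]
    rw [hcomp, AlternatingMap.map_perm, AlternatingMap.map_perm]
    congr 1
    -- now evaluate both sides at the strictly monotone w
    rw [altmap_sum_apply]
    have hwF : w ∈ F := by simp [hF, hwmono]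
    rw [Finset.sum_eq_single_of_mem w hwF ?side]
    · -- main term
      have h1 : coordAlt b k w (fun i => b (w i)) = 1 := by
        rw [coordAlt_apply]
        have : (Matrix.of fun r c => b.repr (b (w r)) (w c)) = (1 : Matrix (Fin k) (Fin k) R) := by
          refine Matrix.ext fun r c => ?_
          simp [Module.Basis.repr_self, Finsupp.single_apply, Matrix.one_apply, hwmono.injective.eq_iff]
        rw [this, Matrix.det_one]
      simp [h1, LinearMap.toSpanSingleton_apply]
    case side =>
      intro s hs hsw
      have hsmono : StrictMono s := (Finset.mem_filter.mp hs).2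
      have hcol : ∃ c, ∀ r, w r ≠ s c := by
        by_contra hcon
        push_neg at hcon
        have hsub : Finset.univ.image s ⊆ Finset.univ.image w := by
          intro z hz
          obtain ⟨c, -, rfl⟩ := Finset.mem_image.mp hz
          obtain ⟨r, hr⟩ := hcon c
          exact Finset.mem_image.mpr ⟨r, Finset.mem_univ r, hr⟩
        have hceq : Finset.univ.image s = Finset.univ.image w := by
          apply Finset.eq_of_subset_of_card_le hsub
          rw [Finset.card_image_of_injective _ hsmono.injective,
            Finset.card_image_of_injective _ hwmono.injective]
        have hrange : Set.range s = Set.range w := by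
          rw [← Set.image_univ, ← Set.image_univ, ← Finset.coe_univ, ← Finset.coe_image,
            ← Finset.coe_image, hceq]
        haveI : WellFoundedLT (Fin k) := inferInstance
        exact hsw ((StrictMono.range_inj (f := s) (g := w) hsmono hwmono).mp hrange)
      obtain ⟨c, hc⟩ := hcol
      have h0 : coordAlt b k s (fun i => b (w i)) = 0 := by
        rw [coordAlt_apply]
        refine Matrix.det_eq_zero_of_column_eq_zero c fun r => ?_
        simp [Module.Basis.repr_self, Finsupp.single_apply, (hc r)]
      simp [h0]
  calc ιMulti R k ω = _ := DFunLike.congr_fun hmaps ω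
  _ = _ := by
    rw [altmap_sum_apply]
    simp only [LinearMap.compAlternatingMap_apply, LinearMap.toSpanSingleton_apply]
    congr!

end AuxLemmas

theorem stmt_3 {R : Type*} [CommRing R] {M : Type*} [AddCommGroup M] [Module R M]
    {m k : ℕ} (b : Module.Basis (Fin m) R M) (hk1 : 1 ≤ k) (hkm : k ≤ m)
    (ω : Fin k → M)
    (hDC : ∃ l : List R, l.length = 2 ∧
      (∀ x ∈ l, x ∈ coeffIdeal R (wedgeProd R ω Finset.univ)) ∧ IsRegSeq R l)
    (η : M) (hη : wedgeProd R ω Finset.univ * ExteriorAlgebra.ι R η = 0) :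
    ∃ a : Fin k → R, η = ∑ i, a i • ω i := by
  classical
  obtain ⟨l, hl2, hlI, hreg⟩ := hDC
  obtain ⟨x, y, rfl⟩ := List.length_eq_two.mp hl2
  have hΩ : wedgeProd R ω Finset.univ = ιMulti R k ω := wedgeProd_univ_eq ω
  have hz : ιMulti R (k + 1) (Fin.snoc ω η) = 0 := by
    rw [iotaMulti_snoc, ← hΩ, hη]
  set N := Submodule.span R (Set.range ω) with hN
  set J : Ideal R := Submodule.comap (LinearMap.toSpanSingleton R M η) N with hJ
  have hsJ : ∀ s : Fin k → Fin m, coordAlt b k s ω ∈ J := fun s => by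
    simpa [hJ, Submodule.mem_comap, LinearMap.toSpanSingleton_apply] using cramer_mem b ω η hz s
  have hφJ : ∀ φ : Module.Dual R (ExteriorAlgebra R M), φ (wedgeProd R ω Finset.univ) ∈ J := by
    intro φ
    rw [hΩ, iotaMulti_expand b ω, map_sum]
    refine Ideal.sum_mem _ fun s _ => ?_
    rw [map_smul, smul_eq_mul]
    exact Ideal.mul_mem_right _ _ (hsJ s)
  have hIJ : coeffIdeal R (wedgeProd R ω Finset.univ) ≤ J := by
    rw [coeffIdeal, Ideal.span_le]
    rintro _ ⟨φ, rfl⟩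
    exact hφJ φ
  have hx0 : ∀ r : R, x * r = 0 → r = 0 := by
    intro r hr
    have h := hreg.2 ⟨0, by simp⟩ r (by simp [hr])
    simpa using h
  have hy1 : ∀ r : R, y * r ∈ Ideal.span {x} → r ∈ Ideal.span {x} := by
    intro r hr
    have hset : {z : R | z ∈ List.take 1 [x, y]} = {x} := by
      simp [Set.setOf_eq_eq_singleton]
    have h := hreg.2 ⟨1, by simp⟩ r (by simpa [hset] using hr)
    simpa [hset] using h
  have hxI : x ∈ coeffIdeal R (wedgeProd R ω Finset.univ) := hlI x (by simp)
  have hxη : x • η ∈ N := by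
    simpa [hJ, Submodule.mem_comap, LinearMap.toSpanSingleton_apply] using hIJ hxI
  have hyη : y • η ∈ N := by
    have hyI : y ∈ coeffIdeal R (wedgeProd R ω Finset.univ) := hlI y (by simp)
    simpa [hJ, Submodule.mem_comap, LinearMap.toSpanSingleton_apply] using hIJ hyI
  rw [hN] at hxη hyη
  obtain ⟨p, hp⟩ := (Submodule.mem_span_range_iff_exists_fun R).mp hxη
  obtain ⟨q, hq⟩ := (Submodule.mem_span_range_iff_exists_fun R).mp hyη
  have hv0 : ∑ i, (y * p i - x * q i) • ω i = 0 := by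
    have h1 : ∑ i, (y * p i) • ω i = y • (x • η) := by
      simp only [mul_smul]; rw [← Finset.smul_sum, hp]
    have h2 : ∑ i, (x * q i) • ω i = x • (y • η) := by
      simp only [mul_smul]; rw [← Finset.smul_sum, hq]
    simp only [sub_smul, Finset.sum_sub_distrib, h1, h2, smul_smul, mul_comm y x, sub_self]
  have hcΩ : ∀ i0 : Fin k, (y * p i0 - x * q i0) • ιMulti R k ω = 0 := by
    intro i0
    have h1 : (ιMulti R k) (Function.update ω i0 (∑ j, (y * p j - x * q j) • ω j)) = 0 := by
      rw [hv0]
      exact AlternatingMap.map_update_zero _ _ _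
    rw [AlternatingMap.map_update_sum] at h1
    rw [Finset.sum_eq_single i0] at h1
    · rw [AlternatingMap.map_update_smul, Function.update_eq_self] at h1
      exact h1
    · intro j _ hj
      rw [AlternatingMap.map_update_smul]
      have : (ιMulti R k) (Function.update ω i0 (ω j)) = 0 := by
        refine AlternatingMap.map_eq_zero_of_eq _ _ ?_ hj.symm
        rw [Function.update_self, Function.update_of_ne hj]
      rw [this, smul_zero]
    · intro h; exact absurd (Finset.mem_univ i0) h
  have hann : ∀ c : R, c • ιMulti R k ω = 0 → c * x = 0 := by
    intro c hc
    have hle : coeffIdeal R (wedgeProd R ω Finset.univ) ≤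
        LinearMap.ker (LinearMap.mul R R c) := by
      rw [coeffIdeal, Ideal.span_le]
      rintro _ ⟨φ, rfl⟩
      simp only [SetLike.mem_coe, LinearMap.mem_ker, LinearMap.mul_apply']
      rw [← smul_eq_mul, ← map_smul, hΩ, hc, map_zero]
    have := hle hxI
    simpa using this
  have hps : ∀ i, ∃ r : R, p i = r * x := by
    intro i
    have hc0 : y * p i - x * q i = 0 := by
      apply hx0
      rw [mul_comm]
      exact hann _ (hcΩ i)
    have h1 : y * p i = x * q i := sub_eq_zero.mp hc0
    have h2 : p i ∈ Ideal.span {x} :=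
      hy1 _ (by rw [h1]; exact Ideal.mem_span_singleton'.mpr ⟨q i, mul_comm _ _⟩)
    obtain ⟨r, hr⟩ := Ideal.mem_span_singleton'.mp h2
    exact ⟨r, hr.symm⟩
  choose r hr using hps
  refine ⟨r, ?_⟩
  have hfin : x • (η - ∑ i, r i • ω i) = 0 := by
    rw [smul_sub, ← hp, Finset.smul_sum, sub_eq_zero]
    refine Finset.sum_congr rfl fun i _ => ?_
    rw [hr i, smul_smul, mul_comm x (r i)]
  have hzero : η - ∑ i, r i • ω i = 0 := by
    refine b.ext_elem_iff.mpr fun t => ?_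
    have h := congrArg (fun z => b.repr z t) hfin
    simp only [map_smul, Finsupp.smul_apply, smul_eq_mul, map_zero, Finsupp.coe_zero,
      Pi.zero_apply] at h
    simpa using hx0 _ h
  rw [← sub_eq_zero]
  exact hzero
end

section
/- Let ω ∈ M and let I(ω) be the ideal generated by the coefficients of ω in a basis of M. If p < depth(I(ω)) (equivalently, I(ω) contains a regular sequence of length p + 1) and η ∈ Λ^p M satisfies ω ∧ η = 0, then η = ω ∧ γ for some γ ∈ Λ^{p−1} M. (Equivalently, the Koszul complex Λ^q M → Λ^{q+1} M given by exterior multiplication by ω is exact in degrees below depth(I(ω)).) -/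
/-!
Statement 5 (Corollary 1 (iii); exactness of the Koszul complex): let `ω ∈ M` and let
`I(ω)` be the ideal generated by the coefficients of `ω` in a basis of `M`.  If
`p < depth I(ω)`, i.e. `I(ω)` contains a regular sequence of length `p + 1`, and
`η ∈ Λ^p M` satisfies `ω ∧ η = 0`, then `η = ω ∧ γ` for some `γ ∈ Λ^{p−1} M`.
-/

open ExteriorAlgebra

namespace Stmt5Aux

variable {R : Type*} [CommRing R] {M : Type*} [AddCommGroup M] [Module R M] {m : ℕ}

lemma exists_dual (ω : M) {a : R} (ha : a ∈ coeffIdeal R (ι R ω)) :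
    ∃ d : Module.Dual R M, d ω = a := by
  have hset : (Set.range fun φ : Module.Dual R (ExteriorAlgebra R M) => φ (ι R ω)) =
      ↑(LinearMap.range (LinearMap.applyₗ (ι R ω) :
        Module.Dual R (ExteriorAlgebra R M) →ₗ[R] R)) := by
    ext a; simp [LinearMap.mem_range, LinearMap.applyₗ]; exact Iff.rfl
  rw [coeffIdeal, hset] at ha
  rw [Ideal.span_eq] at ha
  obtain ⟨φ, hφ⟩ := ha
  exact ⟨φ ∘ₗ ι R, hφ⟩

lemma apply_mem_of_mem_smul (f : ExteriorAlgebra R M →ₗ[R] R) (J : Ideal R)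
    (N : Submodule R (ExteriorAlgebra R M)) {x : ExteriorAlgebra R M} (hx : x ∈ J • N) :
    f x ∈ J := by
  refine Submodule.smul_induction_on hx (fun r hr n _ => ?_) (fun y z hy hz => ?_)
  · rw [map_smul, smul_eq_mul]; exact J.mul_mem_right _ hr
  · rw [map_add]; exact J.add_mem hy hz

lemma map_mem_smul (f : ExteriorAlgebra R M →ₗ[R] ExteriorAlgebra R M) (J : Ideal R)
    {N N' : Submodule R (ExteriorAlgebra R M)} (hN : ∀ y ∈ N, f y ∈ N')
    {x : ExteriorAlgebra R M} (hx : x ∈ J • N) : f x ∈ J • N' := by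
  refine Submodule.smul_induction_on hx (fun r hr n hn => ?_) (fun y z hy hz => ?_)
  · rw [map_smul]; exact Submodule.smul_mem_smul hr (hN n hn)
  · rw [map_add]; exact Submodule.add_mem _ hy hz

lemma ι_mul_mem {p : ℕ} (ω : M) {y : ExteriorAlgebra R M} (hy : y ∈ ⋀[R]^p M) :
    ι R ω * y ∈ ⋀[R]^(p+1) M := by
  rw [exteriorPower, pow_succ']
  exact Submodule.mul_mem_mul (LinearMap.mem_range_self _ ω) hy

lemma mem_degree_zero {y : ExteriorAlgebra R M} (hy : y ∈ ⋀[R]^0 M) :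
    ∃ r : R, algebraMap R (ExteriorAlgebra R M) r = y := by
  rw [exteriorPower, pow_zero, Submodule.one_eq_range] at hy
  exact hy

lemma one_mem_degree_zero : (1 : ExteriorAlgebra R M) ∈ ⋀[R]^0 M := by
  rw [exteriorPower, pow_zero, Submodule.one_eq_range]
  exact ⟨1, by simp⟩

lemma contract_mem (d : Module.Dual R M) :
    ∀ (p : ℕ) (x : ExteriorAlgebra R M), x ∈ ⋀[R]^(p+1) M →
      CliffordAlgebra.contractLeft d x ∈ ⋀[R]^p M := by
  intro p
  induction p with
  | zero =>
      intro x hx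
      rw [exteriorPower, pow_one] at hx
      obtain ⟨v, rfl⟩ := hx
      rw [CliffordAlgebra.contractLeft_ι]
      rw [exteriorPower, pow_zero, Submodule.one_eq_range]
      exact ⟨d v, rfl⟩
  | succ q ih =>
      intro x hx
      rw [exteriorPower, pow_succ'] at hx
      refine Submodule.mul_induction_on hx (fun a ha y hy => ?_) (fun y z hy hz => ?_)
      · obtain ⟨v, rfl⟩ := ha
        rw [CliffordAlgebra.contractLeft_ι_mul]
        refine Submodule.sub_mem _ ?_ ?_
        · exact Submodule.smul_mem (⋀[R]^(q+1) M) (d v) hy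
        · exact ι_mul_mem v (ih y hy)
      · rw [map_add]
        exact Submodule.add_mem _ hy hz

/-- The basis monomial associated to a `p`-element subset of `Fin m`. -/
noncomputable def eS (b : Module.Basis (Fin m) R M) (p : ℕ)
    (s : {s : Finset (Fin m) // s.card = p}) : ExteriorAlgebra R M :=
  ιMulti R p fun i => b (Finset.orderIsoOfFin s.1 s.2 i)

lemma eS_mem (b : Module.Basis (Fin m) R M) (p : ℕ) (s : {s : Finset (Fin m) // s.card = p}) :
    eS b p s ∈ ⋀[R]^p M :=
  ιMulti_range R p (Set.mem_range_self _)

set_option maxHeartbeats 1000000 in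
lemma mem_span_eS (b : Module.Basis (Fin m) R M) (p : ℕ) {x : ExteriorAlgebra R M}
    (hx : x ∈ ⋀[R]^p M) : x ∈ Submodule.span R (Set.range (eS b p)) := by
  rw [← ιMulti_span_fixedDegree] at hx
  refine Submodule.span_le.mpr ?_ hx
  rintro _ ⟨v, rfl⟩
  have h1 : (ιMulti R p (M := M)) v =
      (ιMulti R p (M := M)).toMultilinearMap fun i => ∑ j : Fin m, b.repr (v i) j • b j := by
    rw [show (fun i => ∑ j : Fin m, b.repr (v i) j • b j) = v from
      funext fun i => b.sum_repr (v i)]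
    rfl
  rw [h1, MultilinearMap.map_sum]
  refine Submodule.sum_mem _ fun r _ => ?_
  have h2 : (ιMulti R p (M := M)).toMultilinearMap (fun i => b.repr (v i) (r i) • b (r i)) =
      (∏ i, b.repr (v i) (r i)) • (ιMulti R p (M := M)) fun i => b (r i) :=
    MultilinearMap.map_smul_univ _ _ _
  rw [h2]
  refine Submodule.smul_mem _ _ ?_
  by_cases hinj : Function.Injective r
  · set S : Finset (Fin m) := Finset.univ.image r with hS
    have hScard : S.card = p := by
      rw [hS, Finset.card_image_of_injective _ hinj, Finset.card_univ, Fintype.card_fin]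
    have hmem : ∀ i, r i ∈ S := fun i => Finset.mem_image_of_mem _ (Finset.mem_univ i)
    set g : Fin p → Fin p := fun i => (S.orderIsoOfFin hScard).symm ⟨r i, hmem i⟩ with hg
    have hginj : Function.Injective g := by
      intro i j h
      have h2 : (⟨r i, hmem i⟩ : {x // x ∈ S}) = ⟨r j, hmem j⟩ := by
        have := congrArg (S.orderIsoOfFin hScard) h
        simpa [hg] using this
      exact hinj (congrArg Subtype.val h2)
    have hgbij : Function.Bijective g := Finite.injective_iff_bijective.mp hginj
    set σ : Equiv.Perm (Fin p) := Equiv.ofBijective g hgbij with hσ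
    have hcomp : (fun i => b (r i)) =
        (fun j => b ((S.orderIsoOfFin hScard j : Fin m))) ∘ σ := by
      funext i
      simp only [Function.comp_apply, hσ, Equiv.ofBijective_apply, hg,
        OrderIso.apply_symm_apply]
    rw [hcomp]
    have hperm := (ιMulti R p (M := M)).map_perm
      (fun j => b ((S.orderIsoOfFin hScard j : Fin m))) σ
    rw [hperm]
    have hbase : (ιMulti R p (M := M)) (fun j => b ((S.orderIsoOfFin hScard j : Fin m))) ∈
        Submodule.span R (Set.range (eS b p)) :=
      Submodule.subset_span ⟨⟨S, hScard⟩, rfl⟩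
    rcases Int.units_eq_one_or (Equiv.Perm.sign σ) with h | h
    · rw [h, one_smul]; exact hbase
    · rw [h, Units.smul_def, Units.val_neg, Units.val_one, neg_smul, one_smul]
      exact Submodule.neg_mem _ hbase
  · have h0 : (ιMulti R p (M := M)) (fun i => b (r i)) = 0 :=
      AlternatingMap.map_eq_zero_of_not_injective _ _
        (fun h => hinj fun i j hrij => h (congrArg b hrij))
    rw [h0]
    exact Submodule.zero_mem _

/-- The coordinate functional of the monomial `eS b p s`, built from the determinant. -/
noncomputable def coordFun (b : Module.Basis (Fin m) R M) (p : ℕ)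
    (s : {s : Finset (Fin m) // s.card = p}) : ExteriorAlgebra R M →ₗ[R] R :=
  liftAlternating (R := R)
    (Function.update (fun n => (0 : M [⋀^Fin n]→ₗ[R] R)) p
      ((Matrix.detRowAlternating).compLinearMap
        (LinearMap.pi fun j => b.coord (Finset.orderIsoOfFin s.1 s.2 j))))

set_option maxHeartbeats 1000000 in
lemma coordFun_eS (b : Module.Basis (Fin m) R M) (p : ℕ)
    (s t : {s : Finset (Fin m) // s.card = p}) :
    coordFun b p s (eS b p t) = if s = t then 1 else 0 := by
  rw [coordFun, eS, liftAlternating_apply_ιMulti, Function.update_self]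
  rw [AlternatingMap.compLinearMap_apply]
  have hentry : ∀ i j : Fin p,
      (LinearMap.pi fun j => b.coord (Finset.orderIsoOfFin s.1 s.2 j))
        (b (Finset.orderIsoOfFin t.1 t.2 i)) j =
      if (Finset.orderIsoOfFin t.1 t.2 i : Fin m) =
        (Finset.orderIsoOfFin s.1 s.2 j : Fin m) then 1 else 0 := by
    intro i j
    simp [LinearMap.pi_apply, Module.Basis.coord_apply, Module.Basis.repr_self, Finsupp.single_apply]
    congr
  by_cases hst : s = t
  · subst hst
    rw [if_pos rfl]
    have h1 : (fun i => (LinearMap.pi fun j => b.coord (Finset.orderIsoOfFin s.1 s.2 j))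
        (b (Finset.orderIsoOfFin s.1 s.2 i))) = (1 : Matrix (Fin p) (Fin p) R) := by
      funext i j
      rw [hentry i j, Matrix.one_apply]
      by_cases hij : i = j
      · subst hij; rw [if_pos rfl, if_pos rfl]
      · rw [if_neg (fun h => hij ((Finset.orderIsoOfFin s.1 s.2).injective (Subtype.ext h))),
          if_neg hij]
    rw [h1]
    exact Matrix.det_one
  · rw [if_neg hst]
    -- find an element of t not in s
    have hne : ¬ (t.1 : Finset (Fin m)) ⊆ s.1 := by
      intro hsub
      exact hst (Subtype.ext (Finset.eq_of_subset_of_card_le hsub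
        (by rw [s.2, t.2])).symm)
    obtain ⟨x, hxt, hxs⟩ := Finset.not_subset.mp hne
    set i := (Finset.orderIsoOfFin t.1 t.2).symm ⟨x, hxt⟩ with hi
    have hrow : ∀ j : Fin p,
        (fun i => (LinearMap.pi fun j => b.coord (Finset.orderIsoOfFin s.1 s.2 j))
          (b (Finset.orderIsoOfFin t.1 t.2 i))) i j = 0 := by
      intro j
      simp only []
      rw [hentry i j]
      rw [if_neg]
      intro h
      apply hxs
      have : (Finset.orderIsoOfFin t.1 t.2 i : Fin m) = x := by
        rw [hi, OrderIso.apply_symm_apply]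
      rw [this] at h
      rw [h]
      exact (Finset.orderIsoOfFin s.1 s.2 j).2
    exact Matrix.det_eq_zero_of_row_eq_zero i hrow

lemma eq_sum_coord (b : Module.Basis (Fin m) R M) (p : ℕ) {x : ExteriorAlgebra R M}
    (hx : x ∈ ⋀[R]^p M) :
    x = ∑ s : {s : Finset (Fin m) // s.card = p}, coordFun b p s x • eS b p s := by
  have h := mem_span_eS b p hx
  clear hx
  induction h using Submodule.span_induction with
  | mem x hxm =>
      obtain ⟨t, rfl⟩ := hxm
      have hterm : ∀ s : {s : Finset (Fin m) // s.card = p},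
          coordFun b p s (eS b p t) • eS b p s = if s = t then eS b p t else 0 := by
        intro s
        rw [coordFun_eS]
        by_cases h : s = t
        · subst h; simp
        · simp [h]
      rw [Finset.sum_congr rfl fun s _ => hterm s, Finset.sum_ite_eq' Finset.univ t,
        if_pos (Finset.mem_univ t)]
  | zero => simp
  | add y z hy' hz' hy hz =>
      conv_lhs => rw [hy, hz]
      rw [← Finset.sum_add_distrib]
      exact Finset.sum_congr rfl fun s _ => by rw [map_add, add_smul]
  | smul a y hy' hy =>
      conv_lhs => rw [hy]
      rw [Finset.smul_sum]
      exact Finset.sum_congr rfl fun s _ => by rw [map_smul, smul_eq_mul, mul_smul]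

lemma mem_smul_of_smul_mem (b : Module.Basis (Fin m) R M) (J : Ideal R) {a : R} {p : ℕ}
    (hreg : ∀ r : R, a * r ∈ J → r ∈ J) {x : ExteriorAlgebra R M}
    (hx : x ∈ ⋀[R]^p M) (h : a • x ∈ J • (⋀[R]^p M)) : x ∈ J • (⋀[R]^p M) := by
  rw [eq_sum_coord b p hx]
  refine Submodule.sum_mem _ fun s _ => Submodule.smul_mem_smul (hreg _ ?_) (eS_mem b p s)
  have h2 := apply_mem_of_mem_smul (coordFun b p s) J _ h
  rwa [map_smul, smul_eq_mul] at h2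


lemma span_take_le_succ (l : List R) (k : ℕ) :
    Ideal.span {x : R | x ∈ l.take k} ≤ Ideal.span {x : R | x ∈ l.take (k+1)} := by
  refine Ideal.span_mono fun x hx => ?_
  have : l.take k ⊆ l.take (k+1) := by
    rw [List.take_succ]
    exact fun y hy => List.mem_append_left _ hy
  exact this hx

lemma span_take_succ_eq (l : List R) (k : ℕ) (hk : k < l.length) :
    Ideal.span {x : R | x ∈ l.take (k+1)} =
      Ideal.span {x : R | x ∈ l.take k} ⊔ Ideal.span {l.get ⟨k, hk⟩} := by
  rw [← Ideal.span_union]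
  congr 1
  ext x
  simp only [Set.mem_setOf_eq, Set.mem_union, Set.mem_singleton_iff, List.take_succ,
    List.mem_append, List.getElem?_eq_getElem hk, Option.toList_some, List.mem_singleton,
    List.get_eq_getElem]

lemma master (b : Module.Basis (Fin m) R M) (ω : M) :
    ∀ (p k : ℕ) (l : List R), k + p < l.length →
      (∀ x ∈ l, ∃ d : Module.Dual R M, d ω = x) →
      (∀ i : Fin l.length, ∀ r : R,
        l.get i * r ∈ Ideal.span {x | x ∈ l.take i.1} →
          r ∈ Ideal.span {x | x ∈ l.take i.1}) →
      ∀ η ∈ ⋀[R]^p M,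
        ι R ω * η ∈ Ideal.span {x : R | x ∈ l.take k} • (⋀[R]^(p+1) M) →
        ∃ γ ∈ ⋀[R]^(p-1) M, ι R ω * γ ∈ ⋀[R]^p M ∧
          η - ι R ω * γ ∈ Ideal.span {x : R | x ∈ l.take k} • (⋀[R]^p M) := by
  intro p
  induction p with
  | zero =>
      intro k l hk hdual hreg η hη hmul
      have hk' : k < l.length := by omega
      obtain ⟨r, rfl⟩ := mem_degree_zero hη
      obtain ⟨d, hd⟩ := hdual (l.get ⟨k, hk'⟩) (l.get_mem _)
      set J := Ideal.span {x : R | x ∈ l.take k} with hJ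
      -- apply the functional algebraMapInv ∘ contractLeft d
      set F : ExteriorAlgebra R M →ₗ[R] R :=
        (algebraMapInv (M := M)).toLinearMap ∘ₗ CliffordAlgebra.contractLeft d with hF
      have hFval : F (ι R ω * algebraMap R (ExteriorAlgebra R M) r) = l.get ⟨k, hk'⟩ * r := by
        rw [hF]
        simp only [LinearMap.coe_comp, Function.comp_apply, AlgHom.toLinearMap_apply]
        rw [CliffordAlgebra.contractLeft_ι_mul, CliffordAlgebra.contractLeft_algebraMap,
          mul_zero, sub_zero, map_smul]
        rw [show (algebraMapInv (M := M)) (algebraMap R (ExteriorAlgebra R M) r) = r from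
          algebraMap_leftInverse M r]
        rw [smul_eq_mul, hd]
      have hFmem : F (ι R ω * algebraMap R (ExteriorAlgebra R M) r) ∈ J :=
        apply_mem_of_mem_smul F J _ hmul
      rw [hFval] at hFmem
      have hrJ : r ∈ J := hreg ⟨k, hk'⟩ r hFmem
      refine ⟨0, Submodule.zero_mem _, by rw [mul_zero]; exact Submodule.zero_mem _, ?_⟩
      rw [mul_zero, sub_zero, Algebra.algebraMap_eq_smul_one]
      exact Submodule.smul_mem_smul hrJ one_mem_degree_zero
  | succ q ih =>
      intro k l hk hdual hreg η hη hmul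
      have hk' : k < l.length := by omega
      set a : R := l.get ⟨k, hk'⟩ with ha
      obtain ⟨d, hd⟩ := hdual a (l.get_mem _)
      set J := Ideal.span {x : R | x ∈ l.take k} with hJ
      set J' := Ideal.span {x : R | x ∈ l.take (k+1)} with hJ'
      have hJJ' : J ≤ J' := span_take_le_succ l k
      have haJ' : a ∈ J' := by
        refine Ideal.subset_span ?_
        simp only [Set.mem_setOf_eq, List.take_succ, List.mem_append,
          List.getElem?_eq_getElem hk', Option.toList_some, List.mem_singleton]
        right
        rw [ha, List.get_eq_getElem]
      set ξ := CliffordAlgebra.contractLeft d η with hξ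
      have hξmem : ξ ∈ ⋀[R]^q M := contract_mem d q η hη
      have hw : CliffordAlgebra.contractLeft d (ι R ω * η) ∈ J • (⋀[R]^(q+1) M) :=
        map_mem_smul _ J (fun y hy => contract_mem d (q+1) y hy) hmul
      have hkey : CliffordAlgebra.contractLeft d (ι R ω * η) = a • η - ι R ω * ξ := by
        rw [hξ, CliffordAlgebra.contractLeft_ι_mul, hd]
      have hιξ : ι R ω * ξ ∈ J' • (⋀[R]^(q+1) M) := by
        have h1 : a • η ∈ J' • (⋀[R]^(q+1) M) := Submodule.smul_mem_smul haJ' hη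
        have h2 : CliffordAlgebra.contractLeft d (ι R ω * η) ∈ J' • (⋀[R]^(q+1) M) :=
          Submodule.smul_mono_left hJJ' hw
        have h3 : ι R ω * ξ = a • η - CliffordAlgebra.contractLeft d (ι R ω * η) := by
          rw [hkey]; abel
        rw [h3]
        exact Submodule.sub_mem _ h1 h2
      obtain ⟨γ', hγ'1, hγ'2, hγ'3⟩ := ih (k+1) l (by omega) hdual hreg ξ hξmem hιξ
      set ζ := ξ - ι R ω * γ' with hζ
      have hζmem : ζ ∈ J' • (⋀[R]^q M) := hγ'3
      rw [hJ'] at hζmem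
      rw [span_take_succ_eq l k hk', ← hJ, Submodule.sup_smul] at hζmem
      obtain ⟨ζ₀, hζ₀, z, hz, hsum⟩ := Submodule.mem_sup.mp hζmem
      rw [Submodule.ideal_span_singleton_smul] at hz
      obtain ⟨δ, hδ, rfl⟩ := (AddSubmonoid.mem_smul_pointwise_iff_exists z a
        (⋀[R]^q M).toAddSubmonoid).mp hz
      have hmulζ : ι R ω * ζ = ι R ω * ξ := by
        rw [hζ, mul_sub, ← mul_assoc, ι_sq_zero, zero_mul, sub_zero]
      have hxi : ι R ω * ξ = ι R ω * ζ₀ + a • (ι R ω * δ) := by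
        rw [← hmulζ, show ζ = ζ₀ + a • δ from hsum.symm, mul_add, Algebra.mul_smul_comm]
      have hid : a • (η - ι R ω * δ) =
          CliffordAlgebra.contractLeft d (ι R ω * η) + ι R ω * ζ₀ := by
        have haη : a • η = CliffordAlgebra.contractLeft d (ι R ω * η) + ι R ω * ξ := by
          rw [hkey]; abel
        rw [smul_sub, haη, hxi]
        abel
      have hmemJ : a • (η - ι R ω * δ) ∈ J • (⋀[R]^(q+1) M) := by
        rw [hid]
        refine Submodule.add_mem _ hw ?_
        exact map_mem_smul (LinearMap.mulLeft R (ι R ω)) J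
          (fun y hy => ι_mul_mem ω hy) hζ₀
      have hxmem : η - ι R ω * δ ∈ ⋀[R]^(q+1) M :=
        Submodule.sub_mem _ hη (ι_mul_mem ω hδ)
      have hregk : ∀ r : R, a * r ∈ J → r ∈ J := fun r h => hreg ⟨k, hk'⟩ r h
      have hfinal := mem_smul_of_smul_mem b J hregk hxmem hmemJ
      exact ⟨δ, by simpa using hδ, ι_mul_mem ω hδ, hfinal⟩

end Stmt5Aux

theorem stmt_5 {R : Type*} [CommRing R] {M : Type*} [AddCommGroup M] [Module R M]
    {m : ℕ} (b : Module.Basis (Fin m) R M)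
    (ω : M) (p : ℕ)
    (hDC : ∃ l : List R, l.length = p + 1 ∧
      (∀ x ∈ l, x ∈ coeffIdeal R (ExteriorAlgebra.ι R ω)) ∧ IsRegSeq R l)
    (η : ExteriorAlgebra R M) (hη : η ∈ ⋀[R]^p M)
    (hωη : ExteriorAlgebra.ι R ω * η = 0) :
    ∃ γ : ExteriorAlgebra R M, γ ∈ ⋀[R]^(p - 1) M ∧
      η = ExteriorAlgebra.ι R ω * γ := by
  obtain ⟨l, hlen, hmem, _, hreg⟩ := hDC
  have hdual : ∀ x ∈ l, ∃ d : Module.Dual R M, d ω = x :=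
    fun x hx => Stmt5Aux.exists_dual ω (hmem x hx)
  have hbot : Ideal.span {x : R | x ∈ l.take 0} = ⊥ := by
    simp [Ideal.span_eq_bot]
  have h0 : ι R ω * η ∈ Ideal.span {x : R | x ∈ l.take 0} • (⋀[R]^(p+1) M) := by
    rw [hωη]
    exact Submodule.zero_mem _
  obtain ⟨γ, h1, _, h3⟩ :=
    Stmt5Aux.master b ω p 0 l (by omega) hdual hreg η hη h0
  refine ⟨γ, h1, ?_⟩
  rw [hbot, Submodule.bot_smul, Submodule.mem_bot] at h3
  exact sub_eq_zero.mp h3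
end

section
/- Assume k ≤ p ≤ k + depth(I(Ω)) − 2 (equivalently, k ≤ p and I(Ω) contains a regular sequence of length p − k + 2). Then an element η ∈ Λ^p M can be written as η = ω₁∧⋯∧ω_k ∧ γ for some γ ∈ Λ^{p−k} M if and only if η ∧ ω_i = 0 for every i = 1,…,k. -/
open ExteriorAlgebra

namespace Stmt6

variable {R : Type*} [CommRing R] {M : Type*} [AddCommGroup M] [Module R M]

local notation "EA" => ExteriorAlgebra R M

/-- contraction by a dual element -/
noncomputable def ctr (φ : Module.Dual R M) : ExteriorAlgebra R M →ₗ[R] ExteriorAlgebra R M :=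
  CliffordAlgebra.contractLeft (Q := (0 : QuadraticForm R M)) φ

lemma ctr_ι_mul (φ : Module.Dual R M) (a : M) (x : EA) :
    ctr φ (ι R a * x) = φ a • x - ι R a * ctr φ x :=
  CliffordAlgebra.contractLeft_ι_mul _ _ _

lemma ctr_one (φ : Module.Dual R M) : ctr φ (1 : EA) = 0 :=
  CliffordAlgebra.contractLeft_one _ _

lemma ctr_algebraMap (φ : Module.Dual R M) (r : R) :
    ctr φ (algebraMap R EA r) = 0 :=
  CliffordAlgebra.contractLeft_algebraMap _ _ _

/-- iterated contraction, head applied last -/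
noncomputable def Dc : ∀ {r : ℕ}, (Fin r → Module.Dual R M) → (ExteriorAlgebra R M →ₗ[R] ExteriorAlgebra R M)
  | 0, _ => LinearMap.id
  | (_+1), ψ => ctr (ψ 0) ∘ₗ Dc (Fin.tail ψ)

@[simp] lemma Dc_zero (ψ : Fin 0 → Module.Dual R M) : Dc ψ = LinearMap.id := rfl

lemma Dc_succ {r : ℕ} (ψ : Fin (r+1) → Module.Dual R M) :
    Dc ψ = ctr (ψ 0) ∘ₗ Dc (Fin.tail ψ) := rfl

/-- ideal-smul-top submodules are stable under all linear endomorphisms -/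
lemma smulTop_map {C : Ideal R} {x : EA} (f : ExteriorAlgebra R M →ₗ[R] ExteriorAlgebra R M)
    (hx : x ∈ C • (⊤ : Submodule R EA)) : f x ∈ C • (⊤ : Submodule R EA) := by
  refine Submodule.smul_induction_on hx (fun r hr n _ => ?_) (fun y z hy hz => ?_)
  · rw [map_smul]; exact Submodule.smul_mem_smul hr Submodule.mem_top
  · rw [map_add]; exact Submodule.add_mem _ hy hz

lemma smulTop_scalar {C : Ideal R} {x : EA} (φ : ExteriorAlgebra R M →ₗ[R] R)
    (hx : x ∈ C • (⊤ : Submodule R EA)) : φ x ∈ C := by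
  refine Submodule.smul_induction_on hx (fun r hr n _ => ?_) (fun y z hy hz => ?_)
  · rw [map_smul]; exact Ideal.mul_mem_right _ _ hr
  · rw [map_add]; exact Ideal.add_mem _ hy hz

lemma smulTop_smul {C : Ideal R} {r : R} (hr : r ∈ C) (x : EA) :
    r • x ∈ C • (⊤ : Submodule R EA) :=
  Submodule.smul_mem_smul hr Submodule.mem_top

lemma mem_span_singleton_smulTop {c : R} {x : EA}
    (hx : x ∈ Ideal.span {c} • (⊤ : Submodule R EA)) : ∃ y : EA, x = c • y := by
  refine Submodule.smul_induction_on hx (fun r hr n _ => ?_) (fun y z hy hz => ?_)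
  · obtain ⟨a, rfl⟩ := Ideal.mem_span_singleton'.mp hr
    exact ⟨a • n, by rw [smul_smul, mul_comm]⟩
  · obtain ⟨y', rfl⟩ := hy; obtain ⟨z', rfl⟩ := hz; exact ⟨y' + z', (smul_add _ _ _).symm⟩

/-- products of ι's over a list -/
noncomputable def prodι (υl : List M) : ExteriorAlgebra R M := (υl.map (ι R)).prod

@[simp] lemma prodι_nil : prodι ([] : List M) = (1 : EA) := rfl

@[simp] lemma prodι_cons (u : M) (t : List M) :
    prodι (u :: t) = ι R u * prodι t := by
  simp only [prodι, List.map_cons, List.prod_cons]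

/-- products of ι's over a Fin-tuple -/
noncomputable def prodF {r : ℕ} (υ : Fin r → M) : ExteriorAlgebra R M := prodι (List.ofFn υ)

lemma prodF_get (υl : List M) : prodF (R := R) (υl.get) = prodι υl := by
  unfold prodF; rw [List.ofFn_get]

lemma prodF_cons {r : ℕ} (υ : Fin (r+1) → M) :
    prodF υ = ι R (υ 0) * prodF (Fin.tail υ) := by
  unfold prodF; rw [List.ofFn_succ, prodι_cons]; rfl

lemma prodF_snoc {r : ℕ} (υ : Fin (r+1) → M) :
    prodF υ = prodF (υ ∘ Fin.castSucc) * ι R (υ (Fin.last r)) := by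
  unfold prodF
  rw [List.ofFn_succ', prodι, prodι, List.map_concat, List.prod_concat]
  rfl

lemma ι_swap (x u : M) : ι R x * ι R u = -(ι R u * ι R x) :=
  eq_neg_of_add_eq_zero_left (ι_add_mul_swap x u)

lemma ι_mul_prodι_pow (x : M) (υl : List M) :
    ι R x * prodι υl = ((-1 : R) ^ υl.length) • (prodι υl * ι R x) := by
  induction υl with
  | nil => simp
  | cons u t ih =>
    simp only [prodι_cons, List.length_cons]
    calc ι R x * (ι R u * prodι t)
        = (ι R x * ι R u) * prodι t := by rw [mul_assoc]
      _ = -(ι R u * ι R x) * prodι t := by rw [ι_swap]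
      _ = -(ι R u * (ι R x * prodι t)) := by rw [neg_mul, mul_assoc]
      _ = -(ι R u * ((-1 : R) ^ t.length • (prodι t * ι R x))) := by rw [ih]
      _ = ((-1 : R) ^ (t.length + 1)) • (ι R u * prodι t * ι R x) := by
          rw [mul_smul_comm, pow_succ, mul_neg_one, neg_smul, ← mul_assoc]

lemma ι_mul_prodι_of_mem {u : M} {υl : List M} (hu : u ∈ υl) :
    ι R u * prodι υl = 0 := by
  induction υl with
  | nil => simp at hu
  | cons v t ih =>
    rcases List.mem_cons.mp hu with h | h
    · subst h
      rw [prodι_cons, ← mul_assoc, ι_sq_zero, zero_mul]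
    · rw [prodι_cons, ← mul_assoc, ι_swap, neg_mul, mul_assoc, ih h, mul_zero, neg_zero]

lemma prodι_mul_ι_of_mem {u : M} {υl : List M} (hu : u ∈ υl) :
    prodι υl * ι R u = 0 := by
  have h := ι_mul_prodι_pow (R := R) u υl
  rw [ι_mul_prodι_of_mem hu] at h
  have h2 := congrArg (fun z => ((-1 : R) ^ υl.length) • z) h.symm
  simp only [smul_smul, ← pow_add, smul_zero] at h2
  rwa [← two_mul, pow_mul, neg_one_sq, one_pow, one_smul] at h2

lemma prodι_mem (υl : List M) : prodι υl ∈ ⋀[R]^(υl.length) M := by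
  induction υl with
  | nil =>
    rw [prodι_nil, List.length_nil,
      show (⋀[R]^0 M : Submodule R (ExteriorAlgebra R M)) = 1 from pow_zero _]
    exact Submodule.mem_one.mpr ⟨1, map_one _⟩
  | cons u t ih =>
    rw [prodι_cons, List.length_cons,
      show (⋀[R]^(t.length+1) M : Submodule R (ExteriorAlgebra R M))
        = LinearMap.range (ι R : M →ₗ[R] ExteriorAlgebra R M) * ⋀[R]^(t.length) M
        from pow_succ' _ _]
    exact Submodule.mul_mem_mul (LinearMap.mem_range_self _ u) ih

lemma mem_pow_zero {x : ExteriorAlgebra R M} (hx : x ∈ ⋀[R]^0 M) :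
    ∃ r : R, x = algebraMap R (ExteriorAlgebra R M) r := by
  rw [show (⋀[R]^0 M : Submodule R (ExteriorAlgebra R M)) = 1 from pow_zero _] at hx
  obtain ⟨r, hr⟩ := Submodule.mem_one.mp hx
  exact ⟨r, hr.symm⟩

lemma algebraMap_mem_pow_zero (r : R) :
    algebraMap R (ExteriorAlgebra R M) r ∈ ⋀[R]^0 M := by
  rw [show (⋀[R]^0 M : Submodule R (ExteriorAlgebra R M)) = 1 from pow_zero _]
  exact Submodule.mem_one.mpr ⟨r, rfl⟩

lemma ctr_mem_pow (φ : Module.Dual R M) :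
    ∀ (d : ℕ) (x : EA), x ∈ ⋀[R]^d M → ctr φ x ∈ ⋀[R]^(d-1) M := by
  intro d
  induction d with
  | zero =>
    intro x hx
    obtain ⟨r, rfl⟩ := mem_pow_zero hx
    rw [ctr_algebraMap]
    exact Submodule.zero_mem _
  | succ n ih =>
    intro x hx
    rw [show (⋀[R]^(n+1) M : Submodule R (ExteriorAlgebra R M))
        = LinearMap.range (ι R : M →ₗ[R] ExteriorAlgebra R M) * ⋀[R]^n M
        from pow_succ' _ _] at hx
    refine Submodule.mul_induction_on hx (fun a ha y hy => ?_) (fun a b h1 h2 => ?_)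
    · obtain ⟨v, rfl⟩ := ha
      rw [ctr_ι_mul]
      refine Submodule.sub_mem _ (Submodule.smul_mem _ _ ?_) ?_
      · simpa using hy
      · rcases n with _ | n'
        · obtain ⟨r, rfl⟩ := mem_pow_zero hy
          rw [ctr_algebraMap, mul_zero]
          exact Submodule.zero_mem _
        · have := ih y hy
          simp only [Nat.add_sub_cancel] at this ⊢
          rw [show (⋀[R]^(n'+1) M : Submodule R (ExteriorAlgebra R M))
              = LinearMap.range (ι R : M →ₗ[R] ExteriorAlgebra R M) * ⋀[R]^n' M
              from pow_succ' _ _]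
          exact Submodule.mul_mem_mul (LinearMap.mem_range_self _ v) this
    · rw [map_add]
      exact Submodule.add_mem _ h1 h2

lemma Dc_mem_pow : ∀ {r : ℕ} (ψ : Fin r → Module.Dual R M) (d : ℕ) (x : EA),
    x ∈ ⋀[R]^(r + d) M → Dc ψ x ∈ ⋀[R]^d M := by
  intro r
  induction r with
  | zero => intro ψ d x hx; simpa using hx
  | succ n ih =>
    intro ψ d x hx
    rw [Dc_succ]
    have h1 : Dc (Fin.tail ψ) x ∈ ⋀[R]^(d+1) M := by
      refine ih (Fin.tail ψ) (d+1) x ?_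
      have : n + 1 + d = n + (d + 1) := by omega
      rwa [this] at hx
    have := ctr_mem_pow (ψ 0) (d+1) _ h1
    simpa using this

/-- graded commutation with a degree-one element -/
lemma pow_mem_mul_ι (d : ℕ) (x : EA) (hx : x ∈ ⋀[R]^d M) (v : M) :
    x * ι R v = ((-1 : R) ^ d) • (ι R v * x) := by
  induction hx using Submodule.pow_induction_on_left' with
  | algebraMap r =>
    rw [pow_zero, one_smul]
    exact Algebra.commutes _ _
  | add x y i hx hy ihx ihy =>
    rw [add_mul, mul_add, ihx, ihy, smul_add]
  | mem_mul a ha i x hx ihx =>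
    obtain ⟨w, rfl⟩ := ha
    calc ι R w * x * ι R v = ι R w * (x * ι R v) := by rw [mul_assoc]
      _ = ι R w * (((-1:R)^i) • (ι R v * x)) := by rw [ihx]
      _ = ((-1:R)^i) • (ι R w * ι R v * x) := by rw [mul_smul_comm, mul_assoc]
      _ = ((-1:R)^i) • (-(ι R v * ι R w) * x) := by rw [ι_swap]
      _ = ((-1:R)^(i+1)) • (ι R v * (ι R w * x)) := by
          rw [neg_mul, mul_assoc, pow_succ, mul_neg_one, neg_smul, smul_neg]

/-- sign bookkeeping -/
def sg : ℕ → R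
  | 0 => 1
  | (r+1) => (-1 : R) ^ r * sg r

@[simp] lemma sg_zero : (sg 0 : R) = 1 := rfl
lemma sg_succ (r : ℕ) : (sg (r+1) : R) = (-1 : R) ^ r * sg r := rfl

lemma sg_mul_self (r : ℕ) : (sg r : R) * sg r = 1 := by
  induction r with
  | zero => simp
  | succ n ih =>
    rw [sg_succ]
    calc (-1:R)^n * sg n * ((-1:R)^n * sg n) = ((-1:R)^n * (-1:R)^n) * (sg n * sg n) := by ring
      _ = 1 := by rw [← pow_add, ← two_mul, pow_mul, neg_one_sq, one_pow, ih, mul_one]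

/-- the submodule of left multiples of the `ι u`, `u ∈ s` -/
def Wsp (s : Set M) : Submodule R (ExteriorAlgebra R M) :=
  Submodule.span R {z | ∃ u ∈ s, ∃ y : EA, z = ι R u * y}

lemma Wsp_mono {s t : Set M} (h : s ⊆ t) : (Wsp s : Submodule R EA) ≤ Wsp t :=
  Submodule.span_mono (fun z ⟨u, hu, y, hy⟩ => ⟨u, h hu, y, hy⟩)

lemma mem_Wsp {u : M} {s : Set M} (hu : u ∈ s) (y : EA) : ι R u * y ∈ Wsp s :=
  Submodule.subset_span ⟨u, hu, y, rfl⟩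

lemma prodι_mul_Wsp {υl : List M} {w : EA} (hw : w ∈ Wsp {u | u ∈ υl}) :
    prodι υl * w = 0 := by
  induction hw using Submodule.span_induction with
  | mem z hz =>
    obtain ⟨u, hu, y, rfl⟩ := hz
    rw [← mul_assoc, prodι_mul_ι_of_mem hu, zero_mul]
  | zero => rw [mul_zero]
  | add y z _ _ hy hz => rw [mul_add, hy, hz, add_zero]
  | smul r y _ hy => rw [mul_smul_comm, hy, smul_zero]

lemma algebraMapInv_Wsp {s : Set M} {w : EA} (hw : w ∈ Wsp s) :
    algebraMapInv w = (0 : R) := by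
  induction hw using Submodule.span_induction with
  | mem z hz =>
    obtain ⟨u, hu, y, rfl⟩ := hz
    rw [map_mul]
    have : algebraMapInv (ι R u : EA) = 0 := by
      simp [ExteriorAlgebra.algebraMapInv]
    rw [this, zero_mul]
  | zero => rw [map_zero]
  | add y z _ _ hy hz => rw [map_add, hy, hz, add_zero]
  | smul r y _ hy => rw [map_smul, hy, smul_zero]

section Graded

/-- the degree-`d` graded projection -/
noncomputable def pr (d : ℕ) : ExteriorAlgebra R M →ₗ[R] ExteriorAlgebra R M :=
  (Submodule.subtype _) ∘ₗ
    (DirectSum.component R ℕ (fun i => (⋀[R]^i M : Submodule R (ExteriorAlgebra R M))) d) ∘ₗ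
    (DirectSum.decomposeAlgEquiv (fun i : ℕ => ⋀[R]^i M)).toLinearMap

lemma pr_apply (d : ℕ) (x : EA) :
    pr d x = ((DirectSum.decompose (fun i : ℕ => ⋀[R]^i M) x) d : EA) := rfl

lemma pr_same {d : ℕ} {x : EA} (hx : x ∈ ⋀[R]^d M) : pr d x = x := by
  rw [pr_apply]
  exact DirectSum.decompose_of_mem_same _ hx

lemma pr_ne {d j : ℕ} {x : EA} (hx : x ∈ ⋀[R]^j M) (h : j ≠ d) : pr d x = 0 := by
  rw [pr_apply]
  exact DirectSum.decompose_of_mem_ne _ hx h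

lemma pr_mem (d : ℕ) (x : EA) : pr d x ∈ ⋀[R]^d M := by
  rw [pr_apply]; exact SetLike.coe_mem _

lemma pr_mul {k : ℕ} {u : EA} (hu : u ∈ ⋀[R]^k M) (d : ℕ) (y : EA) :
    pr (k + d) (u * y) = u * pr d y := by
  induction y using DirectSum.Decomposition.inductionOn (fun i : ℕ => ⋀[R]^i M) with
  | zero => rw [mul_zero, map_zero, map_zero, mul_zero]
  | homogeneous z =>
    rename_i j
    obtain ⟨z, hz⟩ := z
    by_cases h : j = d
    · subst h
      rw [pr_same hz, pr_same (SetLike.mul_mem_graded hu hz)]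
    · rw [pr_ne hz h, pr_ne (SetLike.mul_mem_graded hu hz) (fun hc => h (by omega)), mul_zero]
  | add y z hy hz =>
    rw [mul_add, map_add, map_add, mul_add, hy, hz]

end Graded

section Identities

/-- the fundamental expansion of `ι ω * Dc ψ η` when `ι ω * η` lies in a stable submodule -/
lemma lemE {C : Ideal R} : ∀ {r : ℕ} (ψ : Fin (r+1) → Module.Dual R M) (u : M) (η : EA),
    ι R u * η ∈ C • (⊤ : Submodule R (ExteriorAlgebra R M)) →
    ι R u * Dc ψ η -
      ∑ t : Fin (r+1), (((-1 : R) ^ (t : ℕ)) * ψ t u) • Dc (ψ ∘ t.succAbove) η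
      ∈ C • (⊤ : Submodule R (ExteriorAlgebra R M)) := by
  intro r
  induction r with
  | zero =>
    intro ψ u η hη
    have key : ι R u * Dc ψ η - ∑ t : Fin 1, (((-1 : R) ^ (t : ℕ)) * ψ t u) •
        Dc (ψ ∘ t.succAbove) η = -(ctr (ψ 0) (ι R u * η)) := by
      have h1 : Dc ψ η = ctr (ψ 0) η := by
        rw [Dc_succ, LinearMap.comp_apply, Dc_zero, LinearMap.id_apply]
      have h2 : ∀ t : Fin 1, Dc (ψ ∘ t.succAbove) η = η := by
        intro t; rfl
      rw [Fin.sum_univ_one, h1, h2, ctr_ι_mul]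
      simp
    rw [key]
    exact Submodule.neg_mem _ (smulTop_map _ hη)
  | succ n ih =>
    intro ψ u η hη
    have htail := ih (Fin.tail ψ) u η hη
    have key : ι R u * Dc ψ η
        = (ψ 0 u) • Dc (Fin.tail ψ) η - ctr (ψ 0) (ι R u * Dc (Fin.tail ψ) η) := by
      rw [Dc_succ, LinearMap.comp_apply, ctr_ι_mul]
      exact (sub_sub_cancel _ _).symm
    have hid : ∀ t : Fin (n+1), ctr (ψ 0) (Dc (Fin.tail ψ ∘ t.succAbove) η)
        = Dc (ψ ∘ (Fin.succ t).succAbove) η := by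
      intro t
      have e0 : (ψ ∘ (Fin.succ t).succAbove) 0 = ψ 0 := by
        simp [Function.comp, Fin.succAbove_ne_zero_zero (Fin.succ_ne_zero t)]
      have etail : Fin.tail (ψ ∘ (Fin.succ t).succAbove) = Fin.tail ψ ∘ t.succAbove := by
        funext j
        simp [Fin.tail, Function.comp, Fin.succ_succAbove_succ]
      rw [Dc_succ (ψ ∘ (Fin.succ t).succAbove), LinearMap.comp_apply, e0, etail]
    have h2 : ctr (ψ 0) (ι R u * Dc (Fin.tail ψ) η)
        - ∑ t : Fin (n+1), (((-1 : R) ^ (t : ℕ)) * Fin.tail ψ t u) •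
            ctr (ψ 0) (Dc (Fin.tail ψ ∘ t.succAbove) η)
        ∈ C • (⊤ : Submodule R (ExteriorAlgebra R M)) := by
      have := smulTop_map (ctr (ψ 0)) htail
      rw [map_sub, map_sum] at this
      simpa [map_smul] using this
    have goal_eq : ι R u * Dc ψ η
        - ∑ t : Fin (n+2), (((-1 : R) ^ (t : ℕ)) * ψ t u) • Dc (ψ ∘ t.succAbove) η
        = -(ctr (ψ 0) (ι R u * Dc (Fin.tail ψ) η)
            - ∑ t : Fin (n+1), (((-1 : R) ^ (t : ℕ)) * Fin.tail ψ t u) •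
                ctr (ψ 0) (Dc (Fin.tail ψ ∘ t.succAbove) η)) := by
      rw [key, Fin.sum_univ_succ]
      have hz : (ψ ∘ Fin.succAbove (0 : Fin (n+2))) = Fin.tail ψ := by
        funext j; simp [Function.comp, Fin.zero_succAbove, Fin.tail]
      rw [hz]
      simp only [Fin.val_zero, pow_zero, one_mul, Fin.val_succ]
      rw [show (∑ t : Fin (n+1), ((-1:R)^((t:ℕ)+1) * ψ t.succ u) • Dc (ψ ∘ t.succ.succAbove) η)
          = ∑ t : Fin (n+1), -(((-1:R)^(t:ℕ) * ψ t.succ u) • Dc (ψ ∘ t.succ.succAbove) η) from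
        Finset.sum_congr rfl (fun t _ => by rw [← neg_smul]; congr 1; rw [pow_succ]; ring)]
      rw [Finset.sum_neg_distrib]
      rw [show (∑ t : Fin (n+1), ((-1:R)^(t:ℕ) * Fin.tail ψ t u) •
            ctr (ψ 0) (Dc (Fin.tail ψ ∘ t.succAbove) η))
          = ∑ t : Fin (n+1), ((-1:R)^(t:ℕ) * ψ t.succ u) • Dc (ψ ∘ t.succ.succAbove) η from
        Finset.sum_congr rfl (fun t _ => by rw [hid t]; rfl)]
      abel
    rw [goal_eq]
    exact Submodule.neg_mem _ h2

lemma neg_one_pow_sub {t r : ℕ} (h : t ≤ r) : ((-1 : R)) ^ (r - t) = (-1) ^ r * (-1) ^ t := by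
  have h1 : ((-1 : R)) ^ (r - t) * (-1) ^ t = (-1) ^ r := by
    rw [← pow_add, Nat.sub_add_cancel h]
  have h2 : ((-1 : R)) ^ t * (-1) ^ t = 1 := by
    rw [← pow_add, ← two_mul, pow_mul, neg_one_sq, one_pow]
  calc ((-1 : R)) ^ (r - t) = (-1 : R) ^ (r - t) * ((-1) ^ t * (-1) ^ t) := by rw [h2, mul_one]
    _ = ((-1 : R) ^ (r - t) * (-1) ^ t) * (-1) ^ t := by ring
    _ = (-1) ^ r * (-1) ^ t := by rw [h1]

/-- expansion of an iterated contraction of `ι u * z` -/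
lemma lemSingle : ∀ {r : ℕ} (ψ : Fin (r+1) → Module.Dual R M) (u : M) (z : EA),
    Dc ψ (ι R u * z)
      = (∑ t : Fin (r+1), (((-1 : R) ^ (r - (t : ℕ))) * ψ t u) • Dc (ψ ∘ t.succAbove) z)
        + ((-1 : R) ^ (r+1)) • (ι R u * Dc ψ z) := by
  intro r
  induction r with
  | zero =>
    intro ψ u z
    have h1 : Dc ψ (ι R u * z) = ctr (ψ 0) (ι R u * z) := by
      rw [Dc_succ, LinearMap.comp_apply, Dc_zero, LinearMap.id_apply]
    have h2 : Dc ψ z = ctr (ψ 0) z := by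
      rw [Dc_succ, LinearMap.comp_apply, Dc_zero, LinearMap.id_apply]
    rw [h1, h2, ctr_ι_mul, Fin.sum_univ_one]
    show _ = ((-1:R)^(0:ℕ) * (ψ 0) u) • (Dc (ψ ∘ Fin.succAbove 0)) z + _
    have : (Dc (ψ ∘ Fin.succAbove (0 : Fin 1))) z = z := rfl
    rw [this]
    simp [sub_eq_add_neg]
  | succ n ih =>
    intro ψ u z
    have hid : ∀ t : Fin (n+1), ctr (ψ 0) (Dc (Fin.tail ψ ∘ t.succAbove) z)
        = Dc (ψ ∘ (Fin.succ t).succAbove) z := by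
      intro t
      have e0 : (ψ ∘ (Fin.succ t).succAbove) 0 = ψ 0 := by
        simp [Function.comp, Fin.succAbove_ne_zero_zero (Fin.succ_ne_zero t)]
      have etail : Fin.tail (ψ ∘ (Fin.succ t).succAbove) = Fin.tail ψ ∘ t.succAbove := by
        funext j
        simp [Fin.tail, Function.comp, Fin.succ_succAbove_succ]
      rw [Dc_succ (ψ ∘ (Fin.succ t).succAbove), LinearMap.comp_apply, e0, etail]
    have hz : (ψ ∘ Fin.succAbove (0 : Fin (n+2))) = Fin.tail ψ := by
      funext j; simp [Function.comp, Fin.zero_succAbove, Fin.tail]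
    have hDcψ : ctr (ψ 0) (Dc (Fin.tail ψ) z) = Dc ψ z := by
      rw [Dc_succ ψ]; rfl
    calc Dc ψ (ι R u * z) = ctr (ψ 0) (Dc (Fin.tail ψ) (ι R u * z)) := by
          rw [Dc_succ ψ]; rfl
      _ = ctr (ψ 0) ((∑ t : Fin (n+1), (((-1:R)^(n-(t:ℕ))) * Fin.tail ψ t u) •
              Dc (Fin.tail ψ ∘ t.succAbove) z)
            + ((-1:R)^(n+1)) • (ι R u * Dc (Fin.tail ψ) z)) := by rw [ih]
      _ = (∑ t : Fin (n+1), (((-1:R)^(n-(t:ℕ))) * Fin.tail ψ t u) •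
              Dc (ψ ∘ (Fin.succ t).succAbove) z)
            + ((-1:R)^(n+1)) • ((ψ 0) u • Dc (Fin.tail ψ) z - ι R u * Dc ψ z) := by
          rw [map_add, map_sum, map_smul, ctr_ι_mul, hDcψ]
          exact congrArg₂ (· + ·)
            (Finset.sum_congr rfl fun t _ => by rw [map_smul, hid t]) rfl
      _ = (∑ t : Fin (n+2), (((-1 : R) ^ ((n+1) - (t : ℕ))) * ψ t u) •
              Dc (ψ ∘ t.succAbove) z)
            + ((-1 : R) ^ (n+2)) • (ι R u * Dc ψ z) := by
          conv_rhs => rw [Fin.sum_univ_succ]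
          rw [hz]
          simp only [Fin.val_zero, Fin.val_succ, Nat.sub_zero]
          rw [show (∑ i : Fin (n+1), (((-1:R)^(n+1-((i:ℕ)+1))) * ψ i.succ u) •
                Dc (ψ ∘ i.succ.succAbove) z)
              = ∑ t : Fin (n+1), (((-1:R)^(n-(t:ℕ))) * Fin.tail ψ t u) •
                Dc (ψ ∘ t.succ.succAbove) z from
            Finset.sum_congr rfl (fun t _ => by
              rw [show n+1-((t:ℕ)+1) = n - (t:ℕ) from by omega]; rfl)]
          rw [smul_sub, smul_smul]
          rw [show ((-1:R)^(n+1)) • (ι R u * Dc ψ z) = -(((-1:R)^(n+2)) • (ι R u * Dc ψ z))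
            from by rw [← neg_smul]; congr 1; rw [pow_succ (-1:R) (n+1)]; ring]
          abel

/-- contraction of a wedge-multiple picks out a determinant, modulo `Wsp` -/
lemma mainDet : ∀ {r : ℕ} (ψ : Fin r → Module.Dual R M) (υ : Fin r → M) (x : EA),
    ∃ w ∈ Wsp (R := R) (Set.range υ),
      Dc ψ (prodF υ * x)
        = ((sg r : R) * (Matrix.of fun t j => ψ t (υ j)).det) • x + w := by
  intro r
  induction r with
  | zero =>
    intro ψ υ x
    refine ⟨0, Submodule.zero_mem _, ?_⟩
    rw [Dc_zero, LinearMap.id_apply]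
    rw [show prodF υ = (1 : EA) from rfl, one_mul]
    rw [Matrix.det_fin_zero, sg_zero, mul_one, one_smul, add_zero]
  | succ n ih =>
    intro ψ υ x
    set Z := prodF (Fin.tail υ) * x with hZ
    have hsplit : prodF υ * x = ι R (υ 0) * Z := by
      rw [hZ, prodF_cons, mul_assoc]
    rw [hsplit, lemSingle]
    -- apply ih to each term
    have ihs : ∀ t : Fin (n+1), ∃ w ∈ Wsp (R := R) (Set.range (Fin.tail υ)),
        Dc (ψ ∘ t.succAbove) Z
          = ((sg n : R) *
              (Matrix.of fun t' j => (ψ ∘ t.succAbove) t' (Fin.tail υ j)).det) • x + w :=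
      fun t => ih (ψ ∘ t.succAbove) (Fin.tail υ) x
    choose w hw hDce using ihs
    refine ⟨(∑ t : Fin (n+1), (((-1 : R) ^ (n - (t : ℕ))) * ψ t (υ 0)) • w t)
        + ((-1 : R) ^ (n+1)) • (ι R (υ 0) * Dc ψ Z), ?_, ?_⟩
    · refine Submodule.add_mem _ (Submodule.sum_mem _ (fun t _ => Submodule.smul_mem _ _ ?_))
        (Submodule.smul_mem _ _ ?_)
      · refine Wsp_mono ?_ (hw t)
        rintro _ ⟨j, rfl⟩
        exact ⟨j.succ, rfl⟩
      · exact mem_Wsp (Set.mem_range_self 0) _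
    · rw [Finset.sum_congr rfl (fun t _ => by rw [hDce t])]
      have expand : ∀ t : Fin (n+1),
          (((-1 : R) ^ (n - (t : ℕ))) * ψ t (υ 0)) •
            (((sg n : R) *
              (Matrix.of fun t' j => (ψ ∘ t.succAbove) t' (Fin.tail υ j)).det) • x + w t)
          = ((((-1 : R) ^ (n - (t : ℕ))) * ψ t (υ 0) * (sg n) *
              (Matrix.of fun t' j => (ψ ∘ t.succAbove) t' (Fin.tail υ j)).det) • x)
            + (((-1 : R) ^ (n - (t : ℕ))) * ψ t (υ 0)) • w t := by
        intro t
        rw [smul_add, smul_smul]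
        ring_nf
      rw [Finset.sum_congr rfl (fun t _ => by rw [expand t]), Finset.sum_add_distrib,
        ← Finset.sum_smul]
      have hdet : (∑ t : Fin (n+1), ((-1 : R) ^ (n - (t : ℕ))) * ψ t (υ 0) * (sg n) *
            (Matrix.of fun t' j => (ψ ∘ t.succAbove) t' (Fin.tail υ j)).det)
          = (sg (n+1) : R) * (Matrix.of fun t j => ψ t (υ j)).det := by
        rw [Matrix.det_succ_column_zero (Matrix.of fun t j => ψ t (υ j))]
        rw [Finset.mul_sum, Finset.sum_congr rfl (fun t _ => ?_)]
        have hsub : ((Matrix.of fun t j => ψ t (υ j)).submatrix t.succAbove Fin.succ)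
            = (Matrix.of fun t' j => (ψ ∘ t.succAbove) t' (Fin.tail υ j)) := by
          ext t' j; rfl
        rw [hsub]
        rw [neg_one_pow_sub (by omega : (t:ℕ) ≤ n), sg_succ]
        show (-1:R)^n * (-1)^(t:ℕ) * ψ t (υ 0) * sg n * _ = (-1:R)^n * sg n * ((-1)^(t:ℕ) * Matrix.of (fun t j => ψ t (υ j)) t 0 * _)
        have : (Matrix.of fun t j => ψ t (υ j)) t 0 = ψ t (υ 0) := rfl
        rw [this]
        ring
      rw [hdet, add_assoc]

/-- Cramer-type identity: if all `ι (υ j) * η` lie in `C • ⊤` then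
`det(ψ i (υ j)) • η` agrees with `prodF υ * (sg r • Dc ψ η)` modulo `C • ⊤`. -/
lemma claimC {C : Ideal R} : ∀ {r : ℕ} (ψ : Fin r → Module.Dual R M) (υ : Fin r → M) (η : EA),
    (∀ j, ι R (υ j) * η ∈ C • (⊤ : Submodule R (ExteriorAlgebra R M))) →
    prodF υ * Dc ψ η - ((sg r : R) * (Matrix.of fun t j => ψ t (υ j)).det) • η
      ∈ C • (⊤ : Submodule R (ExteriorAlgebra R M)) := by
  intro r
  induction r with
  | zero =>
    intro ψ υ η _
    rw [Dc_zero, LinearMap.id_apply, show prodF υ = (1 : EA) from rfl, one_mul,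
      Matrix.det_fin_zero, sg_zero, mul_one, one_smul, sub_self]
    exact Submodule.zero_mem _
  | succ n ih =>
    intro ψ υ η hη
    set u := υ (Fin.last n) with hu
    have hONE : prodF υ * Dc ψ η
        = prodF (υ ∘ Fin.castSucc) * (ι R u * Dc ψ η) := by
      rw [prodF_snoc, mul_assoc]
    -- lemE
    have hE := lemE ψ u η (hη (Fin.last n))
    -- multiply by prodF (υ ∘ castSucc) on the left
    have hE2 : prodF (υ ∘ Fin.castSucc) * (ι R u * Dc ψ η)
        - prodF (υ ∘ Fin.castSucc) *
            (∑ t : Fin (n+1), (((-1 : R) ^ (t : ℕ)) * ψ t u) • Dc (ψ ∘ t.succAbove) η)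
        ∈ C • (⊤ : Submodule R (ExteriorAlgebra R M)) := by
      have := smulTop_map (LinearMap.mulLeft R (prodF (υ ∘ Fin.castSucc))) hE
      simpa [mul_sub] using this
    -- apply ih termwise
    have ihs : ∀ t : Fin (n+1),
        prodF (υ ∘ Fin.castSucc) * Dc (ψ ∘ t.succAbove) η
          - ((sg n : R) *
              (Matrix.of fun t' j => (ψ ∘ t.succAbove) t' ((υ ∘ Fin.castSucc) j)).det) • η
          ∈ C • (⊤ : Submodule R (ExteriorAlgebra R M)) :=
      fun t => ih (ψ ∘ t.succAbove) (υ ∘ Fin.castSucc) η (fun j => hη (Fin.castSucc j))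
    have hsum : (∑ t : Fin (n+1), (((-1 : R) ^ (t : ℕ)) * ψ t u) •
          (prodF (υ ∘ Fin.castSucc) * Dc (ψ ∘ t.succAbove) η
            - ((sg n : R) *
              (Matrix.of fun t' j => (ψ ∘ t.succAbove) t' ((υ ∘ Fin.castSucc) j)).det) • η))
        ∈ C • (⊤ : Submodule R (ExteriorAlgebra R M)) :=
      Submodule.sum_mem _ (fun t _ => Submodule.smul_mem _ _ (ihs t))
    -- determinant bookkeeping
    have hdet : (∑ t : Fin (n+1), ((-1 : R) ^ (t : ℕ)) * ψ t u * ((sg n : R) *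
          (Matrix.of fun t' j => (ψ ∘ t.succAbove) t' ((υ ∘ Fin.castSucc) j)).det))
        = (sg (n+1) : R) * (Matrix.of fun t j => ψ t (υ j)).det := by
      rw [Matrix.det_succ_column (Matrix.of fun t j => ψ t (υ j)) (Fin.last n)]
      rw [Finset.mul_sum, Finset.sum_congr rfl (fun t _ => ?_)]
      have hsub : ((Matrix.of fun t j => ψ t (υ j)).submatrix t.succAbove
            (Fin.last n).succAbove)
          = (Matrix.of fun t' j => (ψ ∘ t.succAbove) t' ((υ ∘ Fin.castSucc) j)) := by
        rw [Fin.succAbove_last]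
        ext t' j; rfl
      rw [hsub]
      have h1 : (Matrix.of fun t j => ψ t (υ j)) t (Fin.last n) = ψ t u := rfl
      rw [h1, sg_succ]
      have h2 : ((-1:R)) ^ ((t:ℕ) + (Fin.last n : ℕ)) = (-1:R)^(t:ℕ) * (-1:R)^n := by
        rw [pow_add]; rfl
      rw [h2]
      have hnn : ((-1:R))^n * (-1:R)^n = 1 := by
        rw [← pow_add, ← two_mul, pow_mul, neg_one_sq, one_pow]
      linear_combination (-(((-1:R)^(t:ℕ)) * ψ t u * sg n *
        (Matrix.of fun t' j => ((ψ ∘ t.succAbove) t') ((υ ∘ Fin.castSucc) j)).det)) * hnn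
    -- assemble
    have final : prodF υ * Dc ψ η - ((sg (n+1) : R) * (Matrix.of fun t j => ψ t (υ j)).det) • η
        = (prodF (υ ∘ Fin.castSucc) * (ι R u * Dc ψ η)
            - prodF (υ ∘ Fin.castSucc) *
              (∑ t : Fin (n+1), (((-1 : R) ^ (t : ℕ)) * ψ t u) • Dc (ψ ∘ t.succAbove) η))
          + (∑ t : Fin (n+1), (((-1 : R) ^ (t : ℕ)) * ψ t u) •
              (prodF (υ ∘ Fin.castSucc) * Dc (ψ ∘ t.succAbove) η
                - ((sg n : R) *
                  (Matrix.of fun t' j => (ψ ∘ t.succAbove) t' ((υ ∘ Fin.castSucc) j)).det) • η)) := by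
      rw [Finset.sum_congr rfl (fun t _ => smul_sub _ _ _), Finset.sum_sub_distrib]
      rw [show prodF (υ ∘ Fin.castSucc) *
            (∑ t : Fin (n+1), (((-1 : R) ^ (t : ℕ)) * ψ t u) • Dc (ψ ∘ t.succAbove) η)
          = ∑ t : Fin (n+1), (((-1 : R) ^ (t : ℕ)) * ψ t u) •
              (prodF (υ ∘ Fin.castSucc) * Dc (ψ ∘ t.succAbove) η) from by
        rw [Finset.mul_sum]
        exact Finset.sum_congr rfl (fun t _ => mul_smul_comm _ _ _)]
      rw [show (∑ t : Fin (n+1), (((-1 : R) ^ (t : ℕ)) * ψ t u) •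
            (((sg n : R) *
              (Matrix.of fun t' j => (ψ ∘ t.succAbove) t' ((υ ∘ Fin.castSucc) j)).det) • η))
          = ((sg (n+1) : R) * (Matrix.of fun t j => ψ t (υ j)).det) • η from by
        rw [Finset.sum_congr rfl (fun t _ => smul_smul _ _ _), ← Finset.sum_smul, hdet]]
      rw [hONE]
      abel
    rw [final]
    exact Submodule.add_mem _ hE2 hsum

end Identities

section BasisSection

variable {m : ℕ}

/-- the increasing enumeration of a finite set of indices -/
noncomputable def enumJ (J : Finset (Fin m)) {d : ℕ} (hJ : J.card = d) : Fin d → Fin m :=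
  fun i => (J.orderIsoOfFin hJ i : Fin m)

lemma enumJ_strictMono (J : Finset (Fin m)) {d : ℕ} (hJ : J.card = d) :
    StrictMono (enumJ J hJ) := fun i j hij => by
  have := (J.orderIsoOfFin hJ).strictMono hij
  exact this

lemma enumJ_mem (J : Finset (Fin m)) {d : ℕ} (hJ : J.card = d) (i : Fin d) :
    enumJ J hJ i ∈ J := (J.orderIsoOfFin hJ i).2

lemma enumJ_image (J : Finset (Fin m)) {d : ℕ} (hJ : J.card = d) :
    Finset.image (enumJ J hJ) Finset.univ = J := by
  apply Finset.eq_of_subset_of_card_le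
  · intro x hx
    obtain ⟨i, _, rfl⟩ := Finset.mem_image.mp hx
    exact enumJ_mem J hJ i
  · rw [Finset.card_image_of_injective _ (enumJ_strictMono J hJ).injective,
      Finset.card_univ, Fintype.card_fin, hJ]

lemma enumJ_of_strictMono {d : ℕ} {g : Fin d → Fin m} (hg : StrictMono g) :
    enumJ (Finset.image g Finset.univ)
      (by rw [Finset.card_image_of_injective _ hg.injective, Finset.card_univ,
        Fintype.card_fin]) = g := by
  set J := Finset.image g Finset.univ
  set hJ : J.card = d := by
    rw [Finset.card_image_of_injective _ hg.injective, Finset.card_univ, Fintype.card_fin]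
  have hmem : ∀ x : Fin d, g x ∈ J := fun x => Finset.mem_image_of_mem _ (Finset.mem_univ x)
  have := Finset.orderEmbOfFin_unique' hJ (f := OrderEmbedding.ofStrictMono g hg) hmem
  funext i
  have h2 : J.orderEmbOfFin hJ i = g i := by rw [← this]; rfl
  rw [← h2]
  show (J.orderIsoOfFin hJ i : Fin m) = _
  rw [Finset.coe_orderIsoOfFin_apply]

lemma coord_basis_eval (b : Module.Basis (Fin m) R M) (i i' : Fin m) :
    b.coord i (b i') = if i' = i then 1 else 0 := by
  rw [Module.Basis.coord_apply, Module.Basis.repr_self, Finsupp.single_apply]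

/-- determinant of the 0-1 coordinate matrix -/
lemma coordDetδ (b : Module.Basis (Fin m) R M) {d : ℕ} (J : Finset (Fin m)) (hJ : J.card = d)
    {g : Fin d → Fin m} (hg : StrictMono g) :
    (Matrix.of fun t j => b.coord (enumJ J hJ t) (b (g j))).det
      = if J = Finset.image g Finset.univ then 1 else 0 := by
  split_ifs with h
  · subst h
    have hge : enumJ (Finset.image g Finset.univ) hJ = g := enumJ_of_strictMono hg
    have hmat : (Matrix.of fun t j =>
          b.coord (enumJ (Finset.image g Finset.univ) hJ t) (b (g j)))
        = (1 : Matrix (Fin d) (Fin d) R) := by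
      ext t j
      rw [Matrix.of_apply, hge, coord_basis_eval, Matrix.one_apply]
      by_cases hje : t = j
      · simp [hje]
      · rw [if_neg (fun hc => hje (hg.injective hc).symm), if_neg hje]
    rw [hmat, Matrix.det_one]
  · -- some element of J is not in the image of g
    have hsub : ¬ (J ⊆ Finset.image g Finset.univ) := by
      intro hsub
      exact h (Finset.eq_of_subset_of_card_le hsub (by
        rw [Finset.card_image_of_injective _ hg.injective, Finset.card_univ,
          Fintype.card_fin, hJ]))
    obtain ⟨x, hxJ, hxg⟩ := Finset.not_subset.mp hsub
    obtain ⟨t₀, ht₀⟩ : ∃ t₀ : Fin d, enumJ J hJ t₀ = x := by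
      refine ⟨(J.orderIsoOfFin hJ).symm ⟨x, hxJ⟩, ?_⟩
      show ((J.orderIsoOfFin hJ) ((J.orderIsoOfFin hJ).symm ⟨x, hxJ⟩) : Fin m) = x
      rw [OrderIso.apply_symm_apply]
    apply Matrix.det_eq_zero_of_row_eq_zero t₀
    intro j
    rw [Matrix.of_apply, ht₀, coord_basis_eval, if_neg]
    intro hc
    exact hxg (hc ▸ Finset.mem_image_of_mem _ (Finset.mem_univ j))

lemma ιMulti_eq_prodF {d : ℕ} (v : Fin d → M) : ιMulti R d v = prodF v := by
  rw [ιMulti_apply, prodF, prodι, List.map_ofFn]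
  rfl

lemma FJ_ιMulti {d : ℕ} (ψ : Fin d → Module.Dual R M) (v : Fin d → M) :
    algebraMapInv (Dc ψ (ιMulti R d v))
      = (sg d : R) * (Matrix.of fun t j => ψ t (v j)).det := by
  obtain ⟨w, hw, hDc⟩ := mainDet ψ v (1 : EA)
  have h1 : prodF (R := R) v * (1 : EA) = prodF v := mul_one _
  rw [ιMulti_eq_prodF, ← h1, hDc, map_add, map_smul, map_one, algebraMapInv_Wsp hw,
    add_zero, smul_eq_mul, mul_one]

/-- canonical resolution of a homogeneous element in terms of basis monomials -/
noncomputable def Pmap (b : Module.Basis (Fin m) R M) (d : ℕ) :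
    ExteriorAlgebra R M →ₗ[R] ExteriorAlgebra R M :=
  ∑ J : {J : Finset (Fin m) // J.card = d},
    LinearMap.smulRight
      ((ExteriorAlgebra.algebraMapInv).toLinearMap ∘ₗ Dc (fun t => b.coord (enumJ J.1 J.2 t)))
      (ιMulti R d (fun i => b (enumJ J.1 J.2 i)))

lemma Pmap_apply (b : Module.Basis (Fin m) R M) (d : ℕ) (x : EA) :
    Pmap b d x = ∑ J : {J : Finset (Fin m) // J.card = d},
      (algebraMapInv (Dc (fun t => b.coord (enumJ J.1 J.2 t)) x)) •
        (ιMulti R d (fun i => b (enumJ J.1 J.2 i))) := by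
  rw [Pmap, LinearMap.sum_apply]
  rfl

lemma Pmap_eq (b : Module.Basis (Fin m) R M) (d : ℕ) {x : EA} (hx : x ∈ ⋀[R]^d M) :
    Pmap b d x = (sg d : R) • x := by
  have hspan := ιMulti_span_fixedDegree R (M := M) d
  rw [← hspan] at hx
  induction hx using Submodule.span_induction with
  | mem z hz =>
    obtain ⟨v, rfl⟩ := hz
    -- as alternating maps
    have key : (Pmap b d).compAlternatingMap (ιMulti R d)
        = (sg d : R) • (ιMulti R d (M := M)) := by
      apply Module.Basis.ext_alternating b
      intro g hginj
      classical
      have mono_case : ∀ (g' : Fin d → Fin m), StrictMono g' →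
          Pmap b d (ιMulti R d (fun i => b (g' i)))
            = (sg d : R) • ιMulti R d (fun i => b (g' i)) := by
        intro g' hg'
        have hJcard : (Finset.image g' Finset.univ).card = d := by
          rw [Finset.card_image_of_injective _ hg'.injective, Finset.card_univ,
            Fintype.card_fin]
        rw [Pmap_apply]
        rw [Finset.sum_congr rfl (fun J _ => by
          rw [FJ_ιMulti (fun t => b.coord (enumJ J.1 J.2 t)) (fun i => b (g' i)),
            coordDetδ b J.1 J.2 hg'])]
        rw [Finset.sum_eq_single (⟨Finset.image g' Finset.univ, hJcard⟩ :
            {J : Finset (Fin m) // J.card = d})]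
        · rw [if_pos rfl, mul_one]
          congr 1
          show ιMulti R d (fun i => b (enumJ (Finset.image g' Finset.univ) hJcard i)) = _
          rw [show enumJ (Finset.image g' Finset.univ) hJcard = g' from enumJ_of_strictMono hg']
        · intro J _ hne
          rw [if_neg (fun hc => hne (Subtype.ext hc)), mul_zero, zero_smul]
        · intro hmem
          exact absurd (Finset.mem_univ _) hmem
      set J₀ := Finset.image g Finset.univ with hJ₀def
      have hJ₀ : J₀.card = d := by
        rw [hJ₀def, Finset.card_image_of_injective _ hginj, Finset.card_univ, Fintype.card_fin]
      have hmono := enumJ_strictMono J₀ hJ₀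
      have hmemJ : ∀ i, g i ∈ J₀ := fun i => Finset.mem_image_of_mem _ (Finset.mem_univ i)
      set σf : Fin d → Fin d := fun i => (J₀.orderIsoOfFin hJ₀).symm ⟨g i, hmemJ i⟩ with hσf
      have hσ : ∀ i, enumJ J₀ hJ₀ (σf i) = g i := by
        intro i
        show ((J₀.orderIsoOfFin hJ₀) ((J₀.orderIsoOfFin hJ₀).symm ⟨g i, hmemJ i⟩) : Fin m) = g i
        rw [OrderIso.apply_symm_apply]
      have hσinj : Function.Injective σf := fun a a' ha => hginj (by rw [← hσ a, ← hσ a', ha])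
      set perm := Equiv.ofBijective σf (Finite.injective_iff_bijective.mp hσinj) with hperm
      have hcomp : (fun i => b (g i)) = (fun i => b (enumJ J₀ hJ₀ i)) ∘ perm := by
        funext i
        show b (g i) = b (enumJ J₀ hJ₀ (σf i))
        rw [hσ]
      simp only [LinearMap.compAlternatingMap_apply, AlternatingMap.smul_apply]
      rw [hcomp, AlternatingMap.map_perm, Units.smul_def, map_zsmul, mono_case _ hmono]
      exact smul_comm _ _ _
    have := DFunLike.congr_fun key v
    simpa using this
  | zero => rw [map_zero, smul_zero]
  | add y z _ _ hy hz => rw [map_add, hy, hz, smul_add]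
  | smul r y _ hy => rw [map_smul, hy, smul_comm]

lemma prodF_mem {r : ℕ} (υ : Fin r → M) : prodF (R := R) υ ∈ ⋀[R]^r M := by
  have := prodι_mem (R := R) (List.ofFn υ)
  rwa [List.length_ofFn] at this

lemma cancel_smulTop (b : Module.Basis (Fin m) R M) {d : ℕ} {C : Ideal R} {c : R}
    (hcreg : ∀ r : R, c * r ∈ C → r ∈ C) {x : EA} (hx : x ∈ ⋀[R]^d M)
    (hcx : c • x ∈ C • (⊤ : Submodule R (ExteriorAlgebra R M))) :
    x ∈ C • (⊤ : Submodule R (ExteriorAlgebra R M)) := by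
  have hx' : x = (sg d : R) • Pmap b d x := by
    rw [Pmap_eq b d hx, smul_smul, sg_mul_self, one_smul]
  rw [hx', Pmap_apply, Finset.smul_sum]
  refine Submodule.sum_mem _ (fun J _ => ?_)
  rw [smul_comm]
  refine smulTop_smul ?_ _
  set FJ : ExteriorAlgebra R M →ₗ[R] R :=
    (ExteriorAlgebra.algebraMapInv).toLinearMap ∘ₗ Dc (fun t => b.coord (enumJ J.1 J.2 t))
    with hFJ
  have h1 : c * (algebraMapInv (Dc (fun t => b.coord (enumJ J.1 J.2 t)) x)) = FJ (c • x) := by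
    rw [hFJ, LinearMap.comp_apply, map_smul, map_smul]
    rfl
  exact hcreg _ (h1 ▸ smulTop_scalar FJ hcx)

/-- the ideal generated by all `det (ψ t (υ j))` -/
def detIdeal {r : ℕ} (υ : Fin r → M) : Ideal R :=
  Ideal.span {a : R | ∃ ψ : Fin r → Module.Dual R M,
    a = (Matrix.of fun t j => ψ t (υ j)).det}

lemma coeffIdeal_le_detIdeal (b : Module.Basis (Fin m) R M) {r : ℕ} (υ : Fin r → M) :
    coeffIdeal R (prodF υ) ≤ detIdeal υ := by
  rw [coeffIdeal, Ideal.span_le]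
  rintro _ ⟨φ, rfl⟩
  show φ (prodF (R := R) υ) ∈ detIdeal υ
  have hexp : prodF (R := R) υ = (sg r : R) • Pmap b r (prodF υ) := by
    rw [Pmap_eq b r (prodF_mem υ), smul_smul, sg_mul_self, one_smul]
  rw [show φ (prodF (R := R) υ) = φ ((sg r : R) • Pmap b r (prodF υ)) from by rw [← hexp]]
  rw [map_smul, Pmap_apply, map_sum]
  rw [smul_eq_mul, Finset.mul_sum]
  refine Ideal.sum_mem _ (fun J _ => ?_)
  rw [map_smul]
  have hFval : algebraMapInv (Dc (fun t => b.coord (enumJ J.1 J.2 t)) (prodF (R := R) υ))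
      = (sg r : R) * (Matrix.of fun t j => b.coord (enumJ J.1 J.2 t) (υ j)).det := by
    rw [← ιMulti_eq_prodF]
    exact FJ_ιMulti _ _
  rw [hFval]
  refine Ideal.mul_mem_left _ _ ?_
  rw [smul_eq_mul, mul_assoc]
  refine Ideal.mul_mem_left _ _ (Ideal.mul_mem_right _ _ ?_)
  exact Ideal.subset_span ⟨fun t => b.coord (enumJ J.1 J.2 t), rfl⟩

end BasisSection

lemma coeffIdeal_mul_le_right (x y : EA) :
    coeffIdeal R (x * y) ≤ coeffIdeal R y := by
  rw [coeffIdeal, Ideal.span_le]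
  rintro _ ⟨φ, rfl⟩
  show φ (x * y) ∈ coeffIdeal R y
  exact Ideal.subset_span ⟨φ ∘ₗ LinearMap.mulLeft R x, rfl⟩

lemma coeff_pair {C : Ideal R} {y : EA} {s : R}
    (hy : s • y ∈ C • (⊤ : Submodule R (ExteriorAlgebra R M)))
    {a : R} (ha : a ∈ coeffIdeal R y) : s * a ∈ C := by
  induction ha using Submodule.span_induction with
  | mem z hz =>
    obtain ⟨φ, rfl⟩ := hz
    have h1 := smulTop_scalar φ hy
    rwa [map_smul, smul_eq_mul] at h1
  | zero => rw [mul_zero]; exact C.zero_mem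
  | add u v _ _ hu hv => rw [mul_add]; exact C.add_mem hu hv
  | smul r u _ hu =>
    rw [smul_eq_mul, mul_left_comm]
    exact Ideal.mul_mem_left _ _ hu

section Main

variable {m : ℕ}

/-- the ideal generated by the first `i` elements of the list -/
def CI (l : List R) (i : ℕ) : Ideal R := Ideal.span {x | x ∈ l.take i}

/-- the corresponding submodule of the exterior algebra -/
abbrev TT (l : List R) (i : ℕ) : Submodule R (ExteriorAlgebra R M) :=
  CI l i • (⊤ : Submodule R (ExteriorAlgebra R M))

lemma CI_zero (l : List R) : CI l 0 = ⊥ := by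
  unfold CI
  rw [List.take_zero]
  convert Ideal.span_empty
  simp

lemma TT_zero (l : List R) : TT (M := M) l 0 = ⊥ := by
  rw [TT, CI_zero, Submodule.bot_smul]

lemma prodι_mul_ι_pow (x : M) (υl : List M) :
    prodι υl * ι R x = ((-1 : R) ^ υl.length) • (ι R x * prodι υl) := by
  have h := congrArg (fun z => ((-1 : R) ^ υl.length) • z) (ι_mul_prodι_pow (R := R) x υl)
  simp only [smul_smul, ← pow_add, ← two_mul, pow_mul, neg_one_sq, one_pow, one_smul] at h
  exact h.symm

lemma CI_mono (l : List R) (i : ℕ) : CI l i ≤ CI l (i+1) := by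
  apply Ideal.span_mono
  intro x hx
  rw [Set.mem_setOf_eq, List.take_succ]
  exact List.mem_append_left _ hx

lemma TT_mono (l : List R) (i : ℕ) : TT (M := M) l i ≤ TT l (i+1) :=
  Submodule.smul_mono_left (CI_mono l i)

lemma get_mem_CI_succ (l : List R) {i : ℕ} (hi : i < l.length) :
    l.get ⟨i, hi⟩ ∈ CI l (i+1) := by
  apply Ideal.subset_span
  rw [Set.mem_setOf_eq, List.take_succ]
  refine List.mem_append_right _ ?_
  simp [List.getElem?_eq_getElem hi]

lemma CI_succ (l : List R) {i : ℕ} (hi : i < l.length) :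
    CI l (i+1) = CI l i ⊔ Ideal.span {l.get ⟨i, hi⟩} := by
  unfold CI
  rw [← Ideal.span_union]
  congr 1
  ext x
  simp only [Set.mem_setOf_eq, Set.mem_union, Set.mem_singleton_iff, List.take_succ,
    List.mem_append]
  constructor
  · rintro (h | h)
    · exact Or.inl h
    · right
      simpa [List.getElem?_eq_getElem hi] using h
  · rintro (h | h)
    · exact Or.inl h
    · right
      simp [List.getElem?_eq_getElem hi, h]

lemma TT_succ (l : List R) {i : ℕ} (hi : i < l.length) :
    TT (M := M) l (i+1) = TT l i ⊔ Ideal.span {l.get ⟨i, hi⟩} • ⊤ := by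
  rw [TT, CI_succ l hi, Submodule.sup_smul]

/-- dividing by elements of the determinant ideal, modulo `C • ⊤` -/
lemma divStep (b : Module.Basis (Fin m) R M) {r q : ℕ} (υ : Fin r → M) {C : Ideal R} {η : EA}
    (hη : η ∈ ⋀[R]^(r + q) M)
    (hw : ∀ j, ι R (υ j) * η ∈ C • (⊤ : Submodule R (ExteriorAlgebra R M)))
    {a : R} (ha : a ∈ detIdeal υ) :
    ∃ g ∈ ⋀[R]^q M, a • η - prodF υ * g ∈ C • (⊤ : Submodule R (ExteriorAlgebra R M)) := by
  induction ha using Submodule.span_induction with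
  | mem z hz =>
    obtain ⟨ψ, rfl⟩ := hz
    refine ⟨(sg r : R) • Dc ψ η, Submodule.smul_mem _ _ (Dc_mem_pow ψ q η hη), ?_⟩
    have h2 := Submodule.smul_mem _ (sg r : R) (claimC ψ υ η hw)
    rw [smul_sub, smul_smul, ← mul_assoc, sg_mul_self, one_mul] at h2
    have h3 := Submodule.neg_mem _ h2
    rw [neg_sub] at h3
    rw [mul_smul_comm]
    exact h3
  | zero =>
    refine ⟨0, Submodule.zero_mem _, ?_⟩
    rw [zero_smul, mul_zero, sub_zero]
    exact Submodule.zero_mem _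
  | add a a' _ _ iha iha' =>
    obtain ⟨g, hg, hgm⟩ := iha
    obtain ⟨g', hg', hgm'⟩ := iha'
    refine ⟨g + g', Submodule.add_mem _ hg hg', ?_⟩
    have := Submodule.add_mem _ hgm hgm'
    rw [show a • η - prodF υ * g + (a' • η - prodF υ * g')
        = (a + a') • η - prodF υ * (g + g') from by rw [add_smul, mul_add]; abel] at this
    exact this
  | smul s a _ iha =>
    obtain ⟨g, hg, hgm⟩ := iha
    refine ⟨s • g, Submodule.smul_mem _ _ hg, ?_⟩
    have h6 := Submodule.smul_mem _ s hgm
    rw [smul_sub, smul_smul, ← mul_smul_comm] at h6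
    exact h6

lemma statA_zero (b : Module.Basis (Fin m) R M) (l : List R)
    (hreg : ∀ (i : ℕ) (hi : i < l.length) (r : R),
      l.get ⟨i, hi⟩ * r ∈ CI l i → r ∈ CI l i)
    (i : ℕ) (υl : List M) (ζ : EA)
    (hmem : ∀ a ∈ l, a ∈ coeffIdeal R (prodι υl))
    (hζ : ζ ∈ ⋀[R]^0 M) (hprod : prodι υl * ζ ∈ TT l i)
    (hbud : i + 0 + 1 ≤ l.length) :
    ζ ∈ Wsp {u | u ∈ υl} ⊔ TT l i := by
  obtain ⟨r, rfl⟩ := mem_pow_zero hζ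
  have hi : i < l.length := by omega
  have hcomm : prodι (R := R) υl * algebraMap R (ExteriorAlgebra R M) r = r • prodι υl := by
    rw [← Algebra.commutes, ← Algebra.smul_def]
  rw [hcomm] at hprod
  have hc := hmem (l.get ⟨i, hi⟩) (List.get_mem l ⟨i, hi⟩)
  have hr := hreg i hi r (by rw [mul_comm]; exact coeff_pair hprod hc)
  refine Submodule.mem_sup_right ?_
  rw [show algebraMap R (ExteriorAlgebra R M) r = r • (1 : ExteriorAlgebra R M) from by
    rw [Algebra.smul_def, mul_one]]
  exact smulTop_smul hr _

/-- The main mutual induction: statements (A) and (B). -/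
theorem mainAB (b : Module.Basis (Fin m) R M) (l : List R)
    (hreg : ∀ (i : ℕ) (hi : i < l.length) (r : R),
      l.get ⟨i, hi⟩ * r ∈ CI l i → r ∈ CI l i) :
    ∀ N : ℕ,
      (∀ q : ℕ, 2*q ≤ N → ∀ (i : ℕ) (υl : List M) (ζ : EA),
        (∀ a ∈ l, a ∈ coeffIdeal R (prodι υl)) →
        ζ ∈ ⋀[R]^q M → prodι υl * ζ ∈ TT l i → i + q + 1 ≤ l.length →
        ζ ∈ Wsp {u | u ∈ υl} ⊔ TT l i) ∧
      (∀ q : ℕ, 2*q + 1 ≤ N → ∀ (i : ℕ) (υl : List M) (η : EA),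
        (∀ a ∈ l, a ∈ coeffIdeal R (prodι υl)) →
        η ∈ ⋀[R]^(υl.length + q) M → (∀ u ∈ υl, ι R u * η ∈ TT l i) →
        i + q + 2 ≤ l.length →
        ∃ γ ∈ ⋀[R]^q M, η - prodι υl * γ ∈ TT l i) := by
  intro N
  induction N with
  | zero =>
    constructor
    · intro q hq i υl ζ hmem hζ hprod hbud
      have hq0 : q = 0 := by omega
      subst hq0
      exact statA_zero b l hreg i υl ζ hmem hζ hprod hbud
    · intro q hq
      omega
  | succ N ihN =>
    obtain ⟨ihA, ihB⟩ := ihN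
    have hA : ∀ q : ℕ, 2*q ≤ N + 1 → ∀ (i : ℕ) (υl : List M) (ζ : EA),
        (∀ a ∈ l, a ∈ coeffIdeal R (prodι υl)) →
        ζ ∈ ⋀[R]^q M → prodι υl * ζ ∈ TT l i → i + q + 1 ≤ l.length →
        ζ ∈ Wsp {u | u ∈ υl} ⊔ TT l i := by
      intro q hq i υl
      match q with
      | 0 => exact fun ζ hmem hζ hprod hbud => statA_zero b l hreg i υl ζ hmem hζ hprod hbud
      | (q+1) =>
        induction υl with
        | nil =>
          intro ζ hmem hζ hprod hbud
          rw [prodι_nil, one_mul] at hprod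
          exact Submodule.mem_sup_right hprod
        | cons u t iht =>
          intro ζ hmem hζ hprod hbud
          have hmemt : ∀ a ∈ l, a ∈ coeffIdeal R (prodι t) := by
            intro a ha
            have := hmem a ha
            rw [prodι_cons] at this
            exact coeffIdeal_mul_le_right _ _ this
          have hξdeg : prodι (R := R) t * ζ ∈ ⋀[R]^((u :: t).length + q) M := by
            have h1 := SetLike.mul_mem_graded (prodι_mem t) hζ
            rwa [show t.length + (q+1) = (u :: t).length + q from by
              simp [List.length_cons]; omega] at h1
          have hξw : ∀ u' ∈ (u :: t), ι R u' * (prodι (R := R) t * ζ) ∈ TT l i := by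
            intro u' hu'
            rcases List.mem_cons.mp hu' with h | h
            · subst h
              rw [← mul_assoc, ← prodι_cons]
              exact hprod
            · rw [← mul_assoc, ι_mul_prodι_of_mem h, zero_mul]
              exact Submodule.zero_mem _
          obtain ⟨γ, hγ, hγm⟩ := ihB q (by omega) i (u :: t) (prodι t * ζ) hmem hξdeg hξw
            (by omega)
          set ζ' := ζ - ((-1 : R) ^ t.length) • (ι R u * γ) with hζ'def
          have hζ'deg : ζ' ∈ ⋀[R]^(q+1) M := by
            refine Submodule.sub_mem _ hζ (Submodule.smul_mem _ _ ?_)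
            have hι1 : ι R u ∈ ⋀[R]^1 M := by
              rw [show (⋀[R]^1 M : Submodule R (ExteriorAlgebra R M))
                  = LinearMap.range (ι R : M →ₗ[R] ExteriorAlgebra R M) from pow_one _]
              exact LinearMap.mem_range_self _ u
            have h2 := SetLike.mul_mem_graded hι1 hγ
            rwa [show 1 + q = q + 1 from by omega] at h2
          have hms : prodι (R := R) t * (((-1 : R) ^ t.length) • (ι R u * γ))
              = prodι (u :: t) * γ := by
            rw [mul_smul_comm, ← mul_assoc, prodι_mul_ι_pow, smul_mul_assoc, smul_smul,
              ← pow_add, ← two_mul, pow_mul, neg_one_sq, one_pow, one_smul, prodι_cons,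
              mul_assoc]
          have hprod' : prodι (R := R) t * ζ' ∈ TT l i := by
            rw [hζ'def, mul_sub, hms]
            exact hγm
          have hres := iht ζ' hmemt hζ'deg hprod' hbud
          have hζeq : ζ = ζ' + ((-1 : R) ^ t.length) • (ι R u * γ) := by
            rw [hζ'def]; abel
          rw [hζeq]
          refine Submodule.add_mem _ ?_ ?_
          · exact sup_le_sup_right
              (Wsp_mono (fun x hx => List.mem_cons_of_mem u hx)) _ hres
          · exact Submodule.mem_sup_left
              (Submodule.smul_mem _ _ (mem_Wsp (show u ∈ {x | x ∈ u :: t} from List.mem_cons_self) γ))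
    refine ⟨hA, ?_⟩
    intro q hq i υl η hmem hη hwedge hbud
    have hi : i < l.length := by omega
    set c := l.get ⟨i, hi⟩ with hcdef
    have hc : c ∈ coeffIdeal R (prodι υl) := hmem c (List.get_mem l ⟨i, hi⟩)
    have hcdet : c ∈ detIdeal (υl.get) := by
      refine coeffIdeal_le_detIdeal b (υl.get) ?_
      rwa [prodF_get]
    have hηF : η ∈ ⋀[R]^(υl.length + q) M := hη
    have hwF : ∀ j, ι R (υl.get j) * η ∈ TT l i :=
      fun j => hwedge (υl.get j) (List.get_mem _ _)
    match q, hq with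
    | 0, hq =>
      have hi1 : i + 1 < l.length := by omega
      set c' := l.get ⟨i+1, hi1⟩ with hc'def
      have hc' : c' ∈ coeffIdeal R (prodι υl) := hmem c' (List.get_mem l ⟨i+1, hi1⟩)
      have hc'det : c' ∈ detIdeal (υl.get) := by
        refine coeffIdeal_le_detIdeal b (υl.get) ?_
        rwa [prodF_get]
      obtain ⟨g, hg0, hgm⟩ := divStep b (υl.get) hηF hwF hcdet
      obtain ⟨g', hg0', hgm'⟩ := divStep b (υl.get) hηF hwF hc'det
      obtain ⟨r, rfl⟩ := mem_pow_zero hg0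
      obtain ⟨r', rfl⟩ := mem_pow_zero hg0'
      have hcomm : ∀ s : R, prodF (R := R) (υl.get) * algebraMap R (ExteriorAlgebra R M) s
          = s • prodF (υl.get) := by
        intro s
        rw [← Algebra.commutes, ← Algebra.smul_def]
      rw [hcomm] at hgm
      rw [hcomm] at hgm'
      have hX : (c * r' - c' * r) • prodF (R := R) (υl.get)
          = c' • (c • η - r • prodF (υl.get)) - c • (c' • η - r' • prodF (υl.get)) := by
        simp only [smul_sub, smul_smul]
        rw [mul_comm c' c, sub_smul]
        abel
      have hXm : (c * r' - c' * r) • prodF (R := R) (υl.get) ∈ TT l i := by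
        rw [hX]
        exact Submodule.sub_mem _ (Submodule.smul_mem _ _ hgm) (Submodule.smul_mem _ _ hgm')
      have hs : c * r' - c' * r ∈ CI l i := by
        refine hreg i hi _ ?_
        rw [mul_comm]
        refine coeff_pair hXm ?_
        rwa [prodF_get]
      have hc'r : c' * r ∈ CI l (i+1) := by
        have h1 : c * r' - (c * r' - c' * r) ∈ CI l (i+1) :=
          Submodule.sub_mem _ (Ideal.mul_mem_right _ _ (get_mem_CI_succ l hi))
            (CI_mono l i hs)
        rwa [sub_sub_cancel] at h1
      have hr : r ∈ CI l (i+1) := hreg (i+1) hi1 r hc'r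
      rw [CI_succ l hi] at hr
      obtain ⟨r₀, hr₀, rc, hrc, hrsum⟩ := Submodule.mem_sup.mp hr
      obtain ⟨s', hs'⟩ := Ideal.mem_span_singleton'.mp hrc
      have hkey : c • (η - s' • prodF (R := R) (υl.get)) ∈ TT l i := by
        have h2 : (c • η - r • prodF (R := R) (υl.get)) + r₀ • prodF (υl.get) ∈ TT l i :=
          Submodule.add_mem _ hgm (smulTop_smul hr₀ _)
        have h3 : (c • η - r • prodF (R := R) (υl.get)) + r₀ • prodF (υl.get)
            = c • (η - s' • prodF (υl.get)) := by
          rw [← hrsum, ← hs', add_smul, smul_sub, smul_smul, mul_comm c s']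
          abel
        rwa [h3] at h2
      have hxdeg : η - s' • prodF (R := R) (υl.get) ∈ ⋀[R]^(υl.length + 0) M := by
        refine Submodule.sub_mem _ hηF (Submodule.smul_mem _ _ ?_)
        have := prodF_mem (R := R) (υl.get)
        rwa [show υl.length + 0 = υl.length from by omega]
      have hfinal := cancel_smulTop b (fun rr => hreg i hi rr) hxdeg hkey
      refine ⟨algebraMap R (ExteriorAlgebra R M) s', algebraMap_mem_pow_zero s', ?_⟩
      rw [show prodι (R := R) υl * algebraMap R (ExteriorAlgebra R M) s'
          = s' • prodF (υl.get) from by rw [← prodF_get]; exact hcomm s']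
      exact hfinal
    | (q+1), hq =>
      obtain ⟨g, hg, hgm⟩ := divStep b (υl.get) hηF hwF hcdet
      have hPg : prodι (R := R) υl * g ∈ TT l (i+1) := by
        have h1 : c • η ∈ TT l (i+1) := by
          rw [TT_succ l hi]
          exact Submodule.mem_sup_right
            (smulTop_smul (Ideal.subset_span (Set.mem_singleton _)) _)
        have h2 : c • η - prodF (R := R) (υl.get) * g ∈ TT l (i+1) := TT_mono l i hgm
        have h3 := Submodule.sub_mem _ h1 h2
        rw [sub_sub_cancel, prodF_get] at h3
        exact h3
      have hgW := ihA (q+1) (by omega) (i+1) υl g hmem hg hPg (by omega)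
      obtain ⟨w, hwW, v, hv, hwv⟩ := Submodule.mem_sup.mp hgW
      rw [TT_succ l hi] at hv
      obtain ⟨v₀, hv₀, vc, hvc, hvsum⟩ := Submodule.mem_sup.mp hv
      obtain ⟨w', hw'⟩ := mem_span_singleton_smulTop hvc
      have hkey : c • (η - prodι (R := R) υl * w') ∈ TT l i := by
        have h4 : (c • η - prodι (R := R) υl * g) + prodι υl * v₀ ∈ TT l i := by
          refine Submodule.add_mem _ ?_ (smulTop_map (LinearMap.mulLeft R (prodι υl)) hv₀)
          rw [prodF_get] at hgm
          exact hgm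
        have h5 : (c • η - prodι (R := R) υl * g) + prodι υl * v₀
            = c • (η - prodι υl * w') := by
          rw [← hwv, ← hvsum, hw']
          rw [mul_add, mul_add, prodι_mul_Wsp hwW, zero_add, mul_smul_comm, smul_sub]
          abel
        rwa [h5] at h4
      have hproj := smulTop_map (pr (υl.length + (q+1))) hkey
      rw [map_smul, map_sub, pr_same hηF, pr_mul (prodι_mem υl) (q+1) w'] at hproj
      have hxdeg : η - prodι (R := R) υl * pr (q+1) w' ∈ ⋀[R]^(υl.length + (q+1)) M :=
        Submodule.sub_mem _ hηF (SetLike.mul_mem_graded (prodι_mem υl) (pr_mem (q+1) w'))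
      have hfinal := cancel_smulTop b (fun rr => hreg i hi rr) hxdeg hproj
      exact ⟨pr (q+1) w', pr_mem (q+1) w', hfinal⟩

end Main

lemma wedge_eq_prodι {k : ℕ} (ω : Fin k → M) :
    wedgeProd R ω Finset.univ = prodι ((Finset.univ.sort (· ≤ ·)).map ω) := by
  rw [wedgeProd, prodι, List.map_map]
  rfl

lemma sortList_length {k : ℕ} (ω : Fin k → M) :
    ((Finset.univ.sort (· ≤ ·)).map ω).length = k := by
  rw [List.length_map, Finset.length_sort, Finset.card_univ, Fintype.card_fin]

lemma mem_sortList {k : ℕ} (ω : Fin k → M) (u : M) :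
    u ∈ ((Finset.univ.sort (· ≤ ·)).map ω) ↔ ∃ i, ω i = u := by
  simp [List.mem_map, Finset.mem_sort]

end Stmt6

theorem stmt_6 {R : Type*} [CommRing R] {M : Type*} [AddCommGroup M] [Module R M]
    {m k : ℕ} (b : Module.Basis (Fin m) R M) (hk1 : 1 ≤ k) (hkm : k ≤ m)
    (ω : Fin k → M) (p : ℕ) (hkp : k ≤ p)
    (hDC : ∃ l : List R, l.length = p - k + 2 ∧
      (∀ x ∈ l, x ∈ coeffIdeal R (wedgeProd R ω Finset.univ)) ∧ IsRegSeq R l)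
    (η : ExteriorAlgebra R M) (hη : η ∈ ⋀[R]^p M) :
    (∃ γ : ExteriorAlgebra R M, γ ∈ ⋀[R]^(p - k) M ∧
        η = wedgeProd R ω Finset.univ * γ) ↔
      (∀ i : Fin k, η * ExteriorAlgebra.ι R (ω i) = 0) := by
  set υl : List M := (Finset.univ.sort (· ≤ ·)).map ω with hυl
  have hWe : wedgeProd R ω Finset.univ = Stmt6.prodι υl := Stmt6.wedge_eq_prodι ω
  have hlen : υl.length = k := Stmt6.sortList_length ω
  constructor
  · rintro ⟨γ, hγ, rfl⟩ i
    have hωi : ω i ∈ υl := (Stmt6.mem_sortList ω (ω i)).mpr ⟨i, rfl⟩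
    rw [hWe, mul_assoc, Stmt6.pow_mem_mul_ι (p - k) γ hγ (ω i), mul_smul_comm, ← mul_assoc,
      Stmt6.prodι_mul_ι_of_mem hωi, zero_mul, smul_zero]
  · intro hwedge
    obtain ⟨l, hlenl, hcoeff, hproper, hregseq⟩ := hDC
    set q := p - k with hq
    have hreg : ∀ (i : ℕ) (hi : i < l.length) (r : R),
        l.get ⟨i, hi⟩ * r ∈ Stmt6.CI l i → r ∈ Stmt6.CI l i := by
      intro i hi r h
      exact hregseq ⟨i, hi⟩ r h
    have hmem : ∀ a ∈ l, a ∈ coeffIdeal R (Stmt6.prodι υl) := by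
      intro a ha
      have := hcoeff a ha
      rwa [hWe] at this
    have hw : ∀ u ∈ υl, ExteriorAlgebra.ι R u * η ∈ Stmt6.TT l 0 := by
      intro u hu
      obtain ⟨i, rfl⟩ := (Stmt6.mem_sortList ω u).mp hu
      have h1 := Stmt6.pow_mem_mul_ι p η hη (ω i)
      rw [hwedge i] at h1
      have h2 := congrArg (fun z => ((-1 : R) ^ p) • z) h1.symm
      simp only [smul_smul, ← pow_add, ← two_mul, pow_mul, neg_one_sq, one_pow, one_smul,
        smul_zero] at h2
      rw [h2]
      exact Submodule.zero_mem _
    have hdeg : η ∈ ⋀[R]^(υl.length + q) M := by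
      rwa [hlen, hq, Nat.add_sub_cancel' hkp]
    obtain ⟨γ, hγ, hγm⟩ := (Stmt6.mainAB b l hreg (2*q+1)).2 q le_rfl 0 υl η hmem hdeg hw
      (by omega)
    rw [Stmt6.TT_zero, Submodule.mem_bot, sub_eq_zero] at hγm
    exact ⟨γ, hγ, by rw [hWe, hγm]⟩
end

section
/- If the ideal I(Ω) contains a non-zero-divisor of R, then ω₁,…,ω_k are linearly independent over R: whenever a₁,…,a_k ∈ R satisfy Σ_{i=1}^k a_i ω_i = 0, one has a_i = 0 for all i. Consequently the submodule of M spanned by ω₁,…,ω_k is free with basis ω₁,…,ω_k. -/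
/-!
Statement 9: if the ideal `I(Ω)` contains a non-zero-divisor of `R`, then `ω₁, …, ω_k` are
linearly independent over `R`: whenever `Σᵢ aᵢ ωᵢ = 0` one has `aᵢ = 0` for all `i`.
Consequently the submodule of `M` spanned by `ω₁, …, ω_k` is free with basis `ω₁, …, ω_k`
(expressed here by `LinearIndependent R ω`).
-/

open ExteriorAlgebra

theorem prodMap_eq_iotaMulti {R : Type*} [CommRing R] {M : Type*} [AddCommGroup M] [Module R M]
    {k : ℕ} (ω : Fin k → M) (l : List (Fin k)) (h : l.length = k) :
    (l.map fun j => ι R (ω j)).prod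
      = ιMulti R k (fun t => ω (l.get (Fin.cast h.symm t))) := by
  rw [ιMulti_apply]
  congr 1
  apply List.ext_get (by simp [h])
  intro n h1 h2
  simp [List.get_ofFn, List.getElem_map, Fin.cast]

theorem nodup_smul_iotaMulti {R : Type*} [CommRing R] {M : Type*} [AddCommGroup M] [Module R M]
    {k : ℕ} (ω : Fin k → M) (l : List (Fin k)) (h : l.length = k) (hnd : l.Nodup) :
    ∃ u : ℤˣ, (l.map fun j => ι R (ω j)).prod = u • ιMulti R k ω := by
  have einj : Function.Injective (fun t : Fin k => l.get (Fin.cast h.symm t)) := by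
    intro s t hst
    have := List.nodup_iff_injective_get.mp hnd hst
    simpa [Fin.ext_iff] using this
  let σ : Equiv.Perm (Fin k) := Equiv.ofBijective _ (Finite.injective_iff_bijective.mp einj)
  refine ⟨Equiv.Perm.sign σ, ?_⟩
  rw [prodMap_eq_iotaMulti ω l h]
  have : (fun t => ω (l.get (Fin.cast h.symm t))) = ω ∘ σ := rfl
  rw [this, AlternatingMap.map_perm]

theorem stmt_9 {R : Type*} [CommRing R] {M : Type*} [AddCommGroup M] [Module R M]
    {m k : ℕ} (b : Module.Basis (Fin m) R M) (hk1 : 1 ≤ k) (hkm : k ≤ m)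
    (ω : Fin k → M)
    (hnzd : ∃ c ∈ coeffIdeal R (wedgeProd R ω Finset.univ), c ∈ nonZeroDivisors R) :
    (∀ a : Fin k → R, ∑ i, a i • ω i = 0 → ∀ i, a i = 0) ∧ LinearIndependent R ω := by

  obtain ⟨c, hc, hcnzd⟩ := hnzd
  have key : ∀ a : Fin k → R, ∑ i, a i • ω i = 0 → ∀ i, a i = 0 := by
    intro a ha i
    set L : List (Fin k) := (Finset.univ.erase i).sort (· ≤ ·) with hL
    have hLlen : L.length = k - 1 := by
      simp [hL, Finset.card_erase_of_mem]
    have hlen : (i :: L).length = k := by simp [hLlen]; omega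
    set P : ExteriorAlgebra R M := (L.map fun j => ι R (ω j)).prod with hP
    -- the relation multiplied by P
    have hrel : ∑ j, a j • (ι R (ω j) * P) = 0 := by
      have h0 : ι R (∑ j, a j • ω j) * P = 0 := by rw [ha]; simp
      rw [map_sum] at h0
      simp only [map_smul, Finset.sum_mul, smul_mul_assoc] at h0
      exact h0
    -- terms with j ≠ i vanish
    have hzero : ∀ j, j ≠ i → ι R (ω j) * P = 0 := by
      intro j hj
      have hjL : j ∈ L := by
        rw [hL, Finset.mem_sort]
        simp [hj]
      obtain ⟨n, hn⟩ := List.get_of_mem hjL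
      have hn1 : (n : ℕ) + 1 < k := by omega
      have hconslen : (j :: L).length = k := by simp [hLlen]; omega
      have := prodMap_eq_iotaMulti (R := R) ω (j :: L) hconslen
      have hcons : ι R (ω j) * P = ιMulti R k
          (fun t => ω ((j :: L).get (Fin.cast hconslen.symm t))) := by
        rw [← this]; simp [hP]
      rw [hcons]
      apply AlternatingMap.map_eq_zero_of_eq _ _
        (i := (⟨0, by omega⟩ : Fin k)) (j := (⟨(n : ℕ) + 1, hn1⟩ : Fin k))
      · simp [Fin.cast]
        congr 1
        exact hn.symm ▸ (by simp)
      · simp [Fin.ext_iff]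
    have hsum : (∑ j : Fin k, a j • (ι R (ω j) * P)) = a i • (ι R (ω i) * P) :=
      Finset.sum_eq_single_of_mem i (Finset.mem_univ i)
        (fun j _ hj => by rw [hzero j hj, smul_zero])
    have hsingle : a i • (ι R (ω i) * P) = 0 := by rw [← hsum]; exact hrel
    -- identify with ιMulti up to a sign
    have hndL : L.Nodup := Finset.sort_nodup _ _
    have hiL : i ∉ L := by
      rw [hL, Finset.mem_sort]; simp
    obtain ⟨u, hu⟩ := nodup_smul_iotaMulti (R := R) ω (i :: L) hlen
      (List.nodup_cons.mpr ⟨hiL, hndL⟩)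
    have hcons : ι R (ω i) * P = u • ιMulti R k ω := by
      rw [← hu]; simp [hP]
    have hmulti : a i • (ιMulti R k ω : ExteriorAlgebra R M) = 0 := by
      rw [hcons] at hsingle
      rcases Int.units_eq_one_or u with h | h <;>
        simpa [h, Units.smul_def, smul_neg, neg_eq_zero] using hsingle
    -- hence a i kills Ω
    obtain ⟨u₀, hu₀⟩ := nodup_smul_iotaMulti (R := R) ω (Finset.univ.sort (· ≤ ·))
      (by simp) (Finset.sort_nodup _ _)
    have hΩ : a i • wedgeProd R ω Finset.univ = 0 := by
      rw [wedgeProd, hu₀]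
      rcases Int.units_eq_one_or u₀ with h | h <;>
        simp [h, Units.smul_def, smul_neg, neg_eq_zero, hmulti]
    -- a i annihilates the coefficient ideal
    have hann : ∀ r ∈ coeffIdeal R (wedgeProd R ω Finset.univ), a i * r = 0 := by
      intro r hr
      refine Submodule.span_induction ?_ ?_ ?_ ?_ hr
      · rintro _ ⟨φ, rfl⟩
        have : a i * φ (wedgeProd R ω Finset.univ) = φ (a i • wedgeProd R ω Finset.univ) := by
          rw [map_smul]; rfl
        rw [this, hΩ, map_zero]
      · simp
      · intro x y _ _ hx hy; rw [mul_add, hx, hy, add_zero]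
      · intro r x _ hx
        rw [smul_eq_mul, mul_left_comm, hx, mul_zero]
    exact hcnzd.2 (a i) (hann c hc)
  exact ⟨key, Fintype.linearIndependent_iff.mpr key⟩
end

section
/- Assume the elements ω₁,…,ω_k ∈ M can be completed to a basis of M. Then for any integers p ≥ r ≥ 1 and s with r + s = k + 1, every η ∈ Λ^p M satisfying ω_I ∧ η = 0 for all I ∈ 𝒥(s,k) can be represented as η = Σ_{J ∈ 𝒥(r,k)} ω_J ∧ γ_J with γ_J ∈ Λ^{p−r} M. -/
/-!
Statement 17 (Lemma 1): assume `ω₁, …, ω_k ∈ M` can be completed to a basis of `M`.  Then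
for any integers `p ≥ r ≥ 1` and `s` with `r + s = k + 1`, every `η ∈ Λ^p M` satisfying
`ω_I ∧ η = 0` for all `I ∈ 𝒥(s,k)` can be written `η = Σ_{J ∈ 𝒥(r,k)} ω_J ∧ γ_J` with
`γ_J ∈ Λ^{p−r} M`.
-/

open ExteriorAlgebra

section Aux

variable {R : Type*} [CommRing R] {M : Type*} [AddCommGroup M] [Module R M]

lemma my_ι_anticomm (x y : M) : ι R x * ι R y = -(ι R y * ι R x) := by
  rw [eq_neg_iff_add_eq_zero]; exact ι_add_mul_swap x y

lemma my_prod_perm {α : Type*} (f : α → M) {l₁ l₂ : List α} (h : l₁.Perm l₂) :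
    (l₁.map fun j => ι R (f j)).prod = (l₂.map fun j => ι R (f j)).prod ∨
    (l₁.map fun j => ι R (f j)).prod = -(l₂.map fun j => ι R (f j)).prod := by
  induction h with
  | nil => exact Or.inl rfl
  | cons a h ih =>
      simp only [List.map_cons, List.prod_cons]
      rcases ih with h' | h'
      · exact Or.inl (by rw [h'])
      · exact Or.inr (by rw [h', mul_neg])
  | swap a b l =>
      simp only [List.map_cons, List.prod_cons, ← mul_assoc]
      exact Or.inr (by rw [my_ι_anticomm (f b) (f a), neg_mul])
  | trans h₁ h₂ ih₁ ih₂ =>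
      rcases ih₁ with h' | h' <;> rcases ih₂ with h'' | h''
      · exact Or.inl (h'.trans h'')
      · exact Or.inr (h'.trans h'')
      · exact Or.inr (by rw [h', h''])
      · exact Or.inl (by rw [h', h'', neg_neg])

lemma my_contr_list {α : Type*} (d : Module.Dual R M) (f : α → M)
    (l : List α) (hd : ∀ i ∈ l, d (f i) = 0) (x : ExteriorAlgebra R M) :
    CliffordAlgebra.contractLeft (Q := (0 : QuadraticForm R M)) d
        ((l.map fun j => ι R (f j)).prod * x) =
      (l.map fun j => ι R (f j)).prod * CliffordAlgebra.contractLeft (Q := 0) d x ∨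
    CliffordAlgebra.contractLeft (Q := (0 : QuadraticForm R M)) d
        ((l.map fun j => ι R (f j)).prod * x) =
      -((l.map fun j => ι R (f j)).prod * CliffordAlgebra.contractLeft (Q := 0) d x) := by
  induction l with
  | nil => simp
  | cons a l ih =>
      have ha : d (f a) = 0 := hd a List.mem_cons_self
      simp only [List.map_cons, List.prod_cons, mul_assoc]
      rw [CliffordAlgebra.contractLeft_ι_mul, ha, zero_smul, zero_sub]
      rcases ih (fun i hi => hd i (List.mem_cons_of_mem a hi)) with h' | h'
      · exact Or.inr (by rw [h'])
      · exact Or.inl (by rw [h', mul_neg, neg_neg])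

lemma my_mul_mem {a b : ℕ} {x y : ExteriorAlgebra R M}
    (hx : x ∈ ⋀[R]^a M) (hy : y ∈ ⋀[R]^b M) : x * y ∈ ⋀[R]^(a+b) M := by
  rw [exteriorPower, pow_add]
  exact Submodule.mul_mem_mul hx hy

lemma my_ι_mul_mem {a : ℕ} (m : M) {y : ExteriorAlgebra R M}
    (hy : y ∈ ⋀[R]^a M) : ι R m * y ∈ ⋀[R]^(a+1) M := by
  rw [exteriorPower, pow_succ']
  exact Submodule.mul_mem_mul ⟨m, rfl⟩ hy

lemma my_prod_mem {α : Type*} (f : α → M) (l : List α) :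
    (l.map fun j => ι R (f j)).prod ∈ ⋀[R]^l.length M := by
  induction l with
  | nil => simp only [List.map_nil, List.prod_nil, List.length_nil]
           exact (Submodule.mem_one (R := R)).2 ⟨1, map_one _⟩
  | cons a l ih =>
      simp only [List.map_cons, List.prod_cons, List.length_cons]
      exact my_ι_mul_mem (f a) ih

lemma my_contr_zero (d : Module.Dual R M) {x : ExteriorAlgebra R M}
    (hx : x ∈ ⋀[R]^0 M) : CliffordAlgebra.contractLeft (Q := 0) d x = 0 := by
  rw [exteriorPower, pow_zero] at hx
  obtain ⟨r, rfl⟩ := (Submodule.mem_one).1 hx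
  exact CliffordAlgebra.contractLeft_algebraMap 0 d r

lemma my_contr_pow (d : Module.Dual R M) (q : ℕ) {x : ExteriorAlgebra R M}
    (hx : x ∈ ⋀[R]^(q+1) M) :
    CliffordAlgebra.contractLeft (Q := 0) d x ∈ ⋀[R]^q M := by
  induction q generalizing x with
  | zero =>
      rw [exteriorPower, pow_one] at hx
      obtain ⟨a, rfl⟩ := hx
      rw [CliffordAlgebra.contractLeft_ι]
      exact (Submodule.mem_one).2 ⟨d a, rfl⟩
  | succ q ih =>
      rw [exteriorPower, pow_succ'] at hx
      refine Submodule.mul_induction_on hx ?_ ?_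
      · rintro _ ⟨a, rfl⟩ y hy
        rw [CliffordAlgebra.contractLeft_ι_mul]
        refine sub_mem (Submodule.smul_mem _ _ hy) ?_
        rw [exteriorPower, pow_succ']
        exact Submodule.mul_mem_mul ⟨a, rfl⟩ (ih hy)
      · intro u v hu hv
        rw [map_add]; exact add_mem hu hv

variable {k : ℕ}

lemma my_wedge_empty (ω : Fin k → M) : wedgeProd R ω ∅ = 1 := by
  simp [wedgeProd]

lemma my_wedge_mem (ω : Fin k → M) (S : Finset (Fin k)) :
    wedgeProd R ω S ∈ ⋀[R]^(S.card) M := by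
  have := my_prod_mem (R := R) ω (S.sort (· ≤ ·))
  rwa [Finset.length_sort] at this

lemma my_wedge_insert (ω : Fin k → M) {j : Fin k} {S : Finset (Fin k)} (hj : j ∉ S) :
    ι R (ω j) * wedgeProd R ω S = wedgeProd R ω (insert j S) ∨
    ι R (ω j) * wedgeProd R ω S = -(wedgeProd R ω (insert j S)) := by
  have hperm : (j :: S.sort (· ≤ ·)).Perm ((insert j S).sort (· ≤ ·)) := by
    rw [← Multiset.coe_eq_coe]
    show (j ::ₘ (S.sort (· ≤ ·) : Multiset (Fin k))) = _
    rw [Finset.sort_eq, Finset.sort_eq, Finset.insert_val, Multiset.ndinsert_of_notMem hj]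
  have := my_prod_perm (R := R) (fun i : Fin k => ω i) hperm
  simpa [wedgeProd, List.map_cons, List.prod_cons] using this

lemma my_wedge_mul_single (ω : Fin k → M) {j : Fin k} {S : Finset (Fin k)} (hj : j ∉ S) :
    wedgeProd R ω S * ι R (ω j) = wedgeProd R ω (insert j S) ∨
    wedgeProd R ω S * ι R (ω j) = -(wedgeProd R ω (insert j S)) := by
  have hperm : (S.sort (· ≤ ·) ++ [j]).Perm ((insert j S).sort (· ≤ ·)) := by
    rw [← Multiset.coe_eq_coe]
    show ((S.sort (· ≤ ·) : Multiset (Fin k)) + {j}) = _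
    rw [Finset.sort_eq, Finset.sort_eq, Finset.insert_val, Multiset.ndinsert_of_notMem hj,
      add_comm, Multiset.singleton_add]
  have := my_prod_perm (R := R) (fun i : Fin k => ω i) hperm
  simpa [wedgeProd, List.map_append, List.prod_append] using this

lemma my_wedge_split (ω : Fin k → M) {J S : Finset (Fin k)} (hJ : J ⊆ S) :
    wedgeProd R ω S = wedgeProd R ω J * wedgeProd R ω (S \ J) ∨
    wedgeProd R ω S = -(wedgeProd R ω J * wedgeProd R ω (S \ J)) := by
  have hperm : (S.sort (· ≤ ·)).Perm (J.sort (· ≤ ·) ++ (S \ J).sort (· ≤ ·)) := by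
    rw [← Multiset.coe_eq_coe]
    show _ = ((J.sort (· ≤ ·) : Multiset (Fin k)) + ((S \ J).sort (· ≤ ·) : Multiset (Fin k)))
    rw [Finset.sort_eq, Finset.sort_eq, Finset.sort_eq, Finset.sdiff_val,
      add_tsub_cancel_of_le (Finset.val_le_iff.2 hJ)]
  have := my_prod_perm (R := R) (fun i : Fin k => ω i) hperm
  simpa [wedgeProd, List.map_append, List.prod_append] using this

lemma my_contr_wedge (d : Module.Dual R M) (ω : Fin k → M) {I : Finset (Fin k)}
    (hd : ∀ i ∈ I, d (ω i) = 0) (x : ExteriorAlgebra R M) :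
    CliffordAlgebra.contractLeft (Q := (0 : QuadraticForm R M)) d (wedgeProd R ω I * x) =
      wedgeProd R ω I * CliffordAlgebra.contractLeft (Q := 0) d x ∨
    CliffordAlgebra.contractLeft (Q := (0 : QuadraticForm R M)) d (wedgeProd R ω I * x) =
      -(wedgeProd R ω I * CliffordAlgebra.contractLeft (Q := 0) d x) := by
  exact my_contr_list d ω (I.sort (· ≤ ·))
    (fun i hi => hd i ((Finset.mem_sort _).1 hi)) x

/-- the span of elements `ω_S * y` with `S ⊆ U`, `|U| < |S| + t`, `|S| ≤ q`,
`y ∈ ⋀^(q - |S|)`. -/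
def myW (ω : Fin k → M) (U : Finset (Fin k)) (t q : ℕ) :
    Submodule R (ExteriorAlgebra R M) :=
  Submodule.span R {z | ∃ S : Finset (Fin k), ∃ y : ExteriorAlgebra R M,
    S ⊆ U ∧ U.card < S.card + t ∧ S.card ≤ q ∧ y ∈ ⋀[R]^(q - S.card) M ∧
    z = wedgeProd R ω S * y}

lemma my_mem_W_self (ω : Fin k → M) {U : Finset (Fin k)} {t q : ℕ}
    (ht : U.card < t) {x : ExteriorAlgebra R M} (hx : x ∈ ⋀[R]^q M) :
    x ∈ myW ω U t q := by
  refine Submodule.subset_span ⟨∅, x, Finset.empty_subset U, ?_, ?_, ?_, ?_⟩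
  · simpa using ht
  · simp
  · simpa using hx
  · rw [my_wedge_empty, one_mul]

lemma my_main (ω : Fin k → M) (d : Fin k → Module.Dual R M)
    (hd : ∀ i j, d i (ω j) = if i = j then 1 else 0) :
    ∀ (N : ℕ) (U : Finset (Fin k)), U.card ≤ N → ∀ (t q : ℕ) (x : ExteriorAlgebra R M),
      x ∈ ⋀[R]^q M →
      (∀ I : Finset (Fin k), I ⊆ U → I.card = t → wedgeProd R ω I * x = 0) →
      x ∈ myW ω U t q := by
  intro N
  induction N with
  | zero =>
      intro U hU t q x hx hvan
      have hU0 : U = ∅ := Finset.card_eq_zero.1 (Nat.le_zero.1 hU)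
      subst hU0
      rcases Nat.eq_zero_or_pos t with ht | ht
      · subst ht
        have : x = 0 := by
          have := hvan ∅ (Finset.Subset.refl _) rfl
          rwa [my_wedge_empty, one_mul] at this
        rw [this]; exact zero_mem _
      · exact my_mem_W_self ω (by simpa using ht) hx
  | succ N ih =>
      intro U hU t q x hx hvan
      rcases Nat.eq_zero_or_pos t with ht | ht
      · subst ht
        have : x = 0 := by
          have := hvan ∅ (Finset.empty_subset U) rfl
          rwa [my_wedge_empty, one_mul] at this
        rw [this]; exact zero_mem _
      obtain ⟨t', rfl⟩ : ∃ t', t = t' + 1 := ⟨t - 1, by omega⟩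
      rcases Finset.eq_empty_or_nonempty U with hUe | ⟨j, hj⟩
      · subst hUe
        exact my_mem_W_self ω (by simpa using ht) hx
      -- main case
      set U' := U.erase j with hU'
      have hjU' : j ∉ U' := Finset.notMem_erase j U
      have hcard : U'.card + 1 = U.card := Finset.card_erase_add_one hj
      have hU'N : U'.card ≤ N := by omega
      set Dx := CliffordAlgebra.contractLeft (Q := (0 : QuadraticForm R M)) (d j) x with hDx
      set Qx := CliffordAlgebra.contractLeft (Q := (0 : QuadraticForm R M)) (d j)
        (ι R (ω j) * x) with hQx
      have hsplit : x = ι R (ω j) * Dx + Qx := by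
        have h := CliffordAlgebra.contractLeft_ι_mul (Q := (0 : QuadraticForm R M))
          (d := d j) (ω j) x
        rw [hd j j, if_pos rfl, one_smul] at h
        rw [hQx, h]
        abel
      have hdnot : ∀ I : Finset (Fin k), I ⊆ U' → ∀ i ∈ I, (d j) (ω i) = 0 := by
        intro I hI i hi
        have hiU' : i ∈ U' := hI hi
        have : i ≠ j := (Finset.mem_erase.1 hiU').1
        rw [hd j i, if_neg (fun h => this h.symm)]
      -- the Q part
      have hQmem : Qx ∈ ⋀[R]^q M := my_contr_pow (d j) q (my_ι_mul_mem (ω j) hx)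
      have hQvan : ∀ I : Finset (Fin k), I ⊆ U' → I.card = t' → wedgeProd R ω I * Qx = 0 := by
        intro I hI hIc
        have hjI : j ∉ I := fun h => hjU' (hI h)
        have h0 : wedgeProd R ω I * (ι R (ω j) * x) = 0 := by
          have hmem : insert j I ⊆ U :=
            Finset.insert_subset hj (hI.trans (Finset.erase_subset j U))
          have hc : (insert j I).card = t' + 1 := by
            rw [Finset.card_insert_of_notMem hjI, hIc]
          have hz : wedgeProd R ω (insert j I) * x = 0 := hvan _ hmem hc
          rw [← mul_assoc]
          rcases my_wedge_mul_single (R := R) ω hjI with h | h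
          · rw [h, hz]
          · rw [h, neg_mul, hz, neg_zero]
        rcases my_contr_wedge (d j) ω (hdnot I hI) (ι R (ω j) * x) with h | h
        · rw [← h, h0, map_zero]
        · rw [h0, map_zero] at h
          exact neg_eq_zero.1 h.symm
      have hQW : Qx ∈ myW ω U' t' q := ih U' hU'N t' q Qx hQmem hQvan
      have hQle : myW (R := R) ω U' t' q ≤ myW ω U (t' + 1) q := by
        apply Submodule.span_le.2
        rintro z ⟨S, y, hSU, hlt, hle, hy, rfl⟩
        exact Submodule.subset_span
          ⟨S, y, hSU.trans (Finset.erase_subset j U), by omega, hle, hy, rfl⟩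
      -- the D part
      have hDW : ι R (ω j) * Dx ∈ myW ω U (t' + 1) q := by
        rcases Nat.eq_zero_or_pos q with hq | hq
        · subst hq
          have : Dx = 0 := my_contr_zero (d j) hx
          rw [this, mul_zero]; exact zero_mem _
        obtain ⟨q', rfl⟩ : ∃ q', q = q' + 1 := ⟨q - 1, by omega⟩
        have hDmem : Dx ∈ ⋀[R]^q' M := my_contr_pow (d j) q' hx
        have hDvan : ∀ I : Finset (Fin k), I ⊆ U' → I.card = t' + 1 →
            wedgeProd R ω I * Dx = 0 := by
          intro I hI hIc
          have h0 : wedgeProd R ω I * x = 0 :=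
            hvan I (hI.trans (Finset.erase_subset j U)) hIc
          rcases my_contr_wedge (d j) ω (hdnot I hI) x with h | h
          · rw [← h, h0, map_zero]
          · rw [h0, map_zero] at h
            exact neg_eq_zero.1 h.symm
        have hDW' : Dx ∈ myW ω U' (t' + 1) q' := ih U' hU'N (t' + 1) q' Dx hDmem hDvan
        -- multiply by ι (ω j)
        refine Submodule.span_induction ?_ ?_ ?_ ?_ hDW'
        · rintro z ⟨S, y, hSU, hlt, hle, hy, rfl⟩
          have hjS : j ∉ S := fun h => hjU' (hSU h)
          have hSU2 : insert j S ⊆ U :=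
            Finset.insert_subset hj (hSU.trans (Finset.erase_subset j U))
          have hCc : (insert j S).card = S.card + 1 := Finset.card_insert_of_notMem hjS
          have hgen : wedgeProd R ω (insert j S) * y ∈ myW (R := R) ω U (t' + 1) (q' + 1) := by
            refine Submodule.subset_span ⟨insert j S, y, hSU2, by omega, by omega, ?_, rfl⟩
            have : q' + 1 - (insert j S).card = q' - S.card := by omega
            rwa [this]
          rw [← mul_assoc]
          rcases my_wedge_insert (R := R) ω hjS with h | h
          · rw [h]; exact hgen
          · rw [h, neg_mul]; exact neg_mem hgen
        · rw [mul_zero]; exact zero_mem _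
        · intro u v _ _ hu hv
          rw [mul_add]; exact add_mem hu hv
        · intro c u _ hu
          rw [mul_smul_comm]; exact Submodule.smul_mem _ c hu
      rw [hsplit]
      exact add_mem hDW (hQle hQW)

end Aux

theorem stmt_17 {R : Type*} [CommRing R] {M : Type*} [AddCommGroup M] [Module R M]
    {k : ℕ} (hk1 : 1 ≤ k) (ω : Fin k → M)
    (hbasis : ∃ (n : ℕ) (b : Module.Basis (Fin k ⊕ Fin n) R M), ∀ i, b (Sum.inl i) = ω i)
    (p r s : ℕ) (hr1 : 1 ≤ r) (hrp : r ≤ p) (hrs : r + s = k + 1)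
    (η : ExteriorAlgebra R M) (hη : η ∈ ⋀[R]^p M)
    (hB : ∀ I ∈ Finset.univ.powersetCard s, wedgeProd R ω I * η = 0) :
    ∃ γ : Finset (Fin k) → ExteriorAlgebra R M,
      (∀ J, γ J ∈ ⋀[R]^(p - r) M) ∧
      η = ∑ J ∈ Finset.univ.powersetCard r, wedgeProd R ω J * γ J := by
  obtain ⟨n, b, hb⟩ := hbasis
  set d : Fin k → Module.Dual R M := fun i => b.coord (Sum.inl i) with hdd
  have hd : ∀ i j, d i (ω j) = if i = j then 1 else 0 := by
    intro i j
    have h1 : d i (ω j) = b.repr (b (Sum.inl j)) (Sum.inl i) := by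
      rw [hb, hdd]; rfl
    rw [h1, Module.Basis.repr_self_apply]
    by_cases h : i = j
    · subst h; simp
    · rw [if_neg (by simp [Ne.symm h]), if_neg h]
  let G : Submodule R (ExteriorAlgebra R M) :=
  { carrier := {x | ∃ γ : Finset (Fin k) → ExteriorAlgebra R M,
      (∀ J, γ J ∈ ⋀[R]^(p - r) M) ∧
      x = ∑ J ∈ Finset.univ.powersetCard r, wedgeProd R ω J * γ J}
    add_mem' := by
      rintro a c ⟨γ₁, h₁, rfl⟩ ⟨γ₂, h₂, rfl⟩
      refine ⟨γ₁ + γ₂, fun J => add_mem (h₁ J) (h₂ J), ?_⟩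
      rw [← Finset.sum_add_distrib]
      exact Finset.sum_congr rfl fun J _ => (mul_add _ _ _).symm
    zero_mem' := ⟨0, fun J => zero_mem _, by simp⟩
    smul_mem' := by
      rintro c a ⟨γ, h, rfl⟩
      refine ⟨c • γ, fun J => Submodule.smul_mem _ c (h J), ?_⟩
      rw [Finset.smul_sum]
      exact Finset.sum_congr rfl fun J _ => (mul_smul_comm _ _ _).symm }
  have hWG : myW ω Finset.univ s p ≤ G := by
    apply Submodule.span_le.2
    rintro z ⟨S, y, -, hlt, hle, hy, rfl⟩
    have hcard : (Finset.univ : Finset (Fin k)).card = k := by simp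
    rw [hcard] at hlt
    have hrS : r ≤ S.card := by omega
    obtain ⟨J, hJS, hJc⟩ := Finset.exists_subset_card_eq hrS
    have hJmem : J ∈ Finset.univ.powersetCard r :=
      Finset.mem_powersetCard.2 ⟨Finset.subset_univ J, hJc⟩
    have hymem : wedgeProd R ω (S \ J) * y ∈ ⋀[R]^(p - r) M := by
      have h2 := my_mul_mem (my_wedge_mem (R := R) ω (S \ J)) hy
      have hc : (S \ J).card = S.card - r := by rw [Finset.card_sdiff_of_subset hJS, hJc]
      rw [hc] at h2
      rwa [show S.card - r + (p - S.card) = p - r by omega] at h2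
    rcases my_wedge_split (R := R) ω hJS with h | h
    · refine ⟨fun J' => if J' = J then wedgeProd R ω (S \ J) * y else 0, ?_, ?_⟩
      · intro J'
        by_cases hJ' : J' = J
        · simpa [hJ'] using hymem
        · simp [hJ']
      · simp only [mul_ite, mul_zero]
        rw [Finset.sum_ite_eq' (Finset.univ.powersetCard r) J
          (fun J' => wedgeProd R ω J' * (wedgeProd R ω (S \ J) * y)), if_pos hJmem,
          ← mul_assoc, ← h]
    · refine ⟨fun J' => if J' = J then -(wedgeProd R ω (S \ J) * y) else 0, ?_, ?_⟩
      · intro J'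
        by_cases hJ' : J' = J
        · simpa [hJ'] using neg_mem hymem
        · simp [hJ']
      · simp only [mul_ite, mul_zero]
        rw [Finset.sum_ite_eq' (Finset.univ.powersetCard r) J
          (fun J' => wedgeProd R ω J' * -(wedgeProd R ω (S \ J) * y)), if_pos hJmem,
          mul_neg, ← mul_assoc, ← neg_mul, ← h]
  have hηW : η ∈ myW ω Finset.univ s p :=
    my_main ω d hd k Finset.univ (by simp) s p η hη
      (fun I hIsub hIc => hB I (Finset.mem_powersetCard.2 ⟨hIsub, hIc⟩))
  exact hWG hηW
end
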